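/- arXiv:2408.12688 — 4 statements merged into one kernel-verified Lean document; each statement's English description precedes it below -/
import Mathlib

section
/- Let f: X → X be a continuum-wise expansive homeomorphism of a compact metric space (X,d). Suppose that for each n ∈ ℕ there is a pair (S_n, U_n) of non-trivial subcontinua of X with S_n stable (diam(f^k(S_n)) → 0 as k → ∞) and U_n unstable (diam(f^{-k}(U_n)) → 0 as k → ∞), such that (1) d_H(S_n, U_n) → 0 as n → ∞, and (2) there exists r > 0 with diam(S_n) > r and diam(U_n) > r for every n ∈ ℕ. Then the induced map C(f) on the hyperspace of continua C(X) does not have the shadowing property. -/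
open Set Metric Filter Function

/-- The `n`-th iterate over `ℤ` of the invertible system with forward map `g`
and backward map `ginv`. -/
def iterZ {X : Type*} (g ginv : X → X) : ℤ → X → X
  | Int.ofNat n => g^[n]
  | Int.negSucc n => ginv^[n + 1]

/-- Two-sided shadowing property for an invertible system `(g, ginv)`. -/
def ShadowingZ {X : Type*} [MetricSpace X] (g ginv : X → X) : Prop :=
  ∀ ε > 0, ∃ δ > 0, ∀ x : ℤ → X,
    (∀ n : ℤ, dist (g (x n)) (x (n + 1)) < δ) →
      ∃ y : X, ∀ n : ℤ, dist (iterZ g ginv n y) (x n) < ε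

/-- One-sided shadowing property for a map `g`. -/
def ShadowingN {X : Type*} [MetricSpace X] (g : X → X) : Prop :=
  ∀ ε > 0, ∃ δ > 0, ∀ x : ℕ → X,
    (∀ n : ℕ, dist (g (x n)) (x (n + 1)) < δ) →
      ∃ y : X, ∀ n : ℕ, dist (g^[n] y) (x n) < ε

/-- The hyperspace of (nonempty) subcontinua of `X`, with the Hausdorff metric. -/
abbrev Continua (X : Type*) [MetricSpace X] : Type _ :=
  {A : TopologicalSpace.NonemptyCompacts X // IsConnected (A : Set X)}

/-- The induced map `C(f)` on the hyperspace of continua. -/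
def inducedC {X : Type*} [MetricSpace X] (f : X → X) (hf : Continuous f) :
    Continua X → Continua X := fun A =>
  ⟨⟨⟨f '' (A.1 : Set X), A.1.isCompact.image hf⟩, A.1.nonempty.image f⟩,
    A.2.image f hf.continuousOn⟩

/-- The `c`-stable set of `x` for the map `g`. -/
def Ws {X : Type*} [MetricSpace X] (g : X → X) (c : ℝ) (x : X) : Set X :=
  {y | ∀ k : ℕ, dist (g^[k] y) (g^[k] x) ≤ c}

/-- Topological transitivity. -/
def TransitiveMap {X : Type*} [TopologicalSpace X] (g : X → X) : Prop :=
  ∀ U V : Set X, IsOpen U → IsOpen V → U.Nonempty → V.Nonempty →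
    ∃ n : ℕ, ((g^[n] '' U) ∩ V).Nonempty

/-- `A` is a quasi-attractor of `g`. -/
def QuasiAttractor {X : Type*} [TopologicalSpace X] (g : X → X) (A : Set X) : Prop :=
  IsCompact A ∧ g '' A = A ∧
    ∀ U : Set X, IsOpen U → A ⊆ U →
      ∃ V : Set X, IsOpen V ∧ A ⊆ V ∧ V ⊆ U ∧ closure (g '' V) ⊆ V

/-- `A` is a quasi-attractor of the restriction of `g` to the invariant set `s`. -/
def QuasiAttractorOn {X : Type*} [TopologicalSpace X] (g : X → X) (s A : Set X) : Prop :=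
  IsCompact A ∧ A ⊆ s ∧ g '' A = A ∧
    ∀ U : Set X, IsOpen U → A ⊆ U →
      ∃ V : Set X, IsOpen V ∧ A ⊆ V ∧ V ∩ s ⊆ U ∧ closure (g '' (V ∩ s)) ∩ s ⊆ V

/-- Shadowing property for the restriction of the invertible system `(g, ginv)`
to an invariant set `s`. -/
def ShadowingZOn {X : Type*} [MetricSpace X] (g ginv : X → X) (s : Set X) : Prop :=
  ∀ ε > 0, ∃ δ > 0, ∀ x : ℤ → X, (∀ n : ℤ, x n ∈ s) →
    (∀ n : ℤ, dist (g (x n)) (x (n + 1)) < δ) →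
      ∃ y ∈ s, ∀ n : ℤ, dist (iterZ g ginv n y) (x n) < ε

/-- `(X, f)` is a simple dynamical system with quasi-attractor fixed point `p`
and quasi-repeller fixed point `q`. -/
def SimpleSystem {X : Type*} [MetricSpace X] (f : X ≃ₜ X) (p q : X) : Prop :=
  f p = p ∧ f q = q ∧ QuasiAttractor ⇑f {p} ∧ QuasiAttractor ⇑f.symm {q} ∧
    ∀ x : X, x ≠ p → x ≠ q →
      Tendsto (fun n : ℕ => (⇑f)^[n] x) atTop (nhds p) ∧
      Tendsto (fun n : ℕ => (⇑f.symm)^[n] x) atTop (nhds q)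

section AuxLemmas

/-- clopen set between a connected component and an open set, in compact T2 spaces -/
lemma my_exists_clopen_between {Z : Type*} [TopologicalSpace Z] [T2Space Z] [CompactSpace Z]
    (z : Z) {O : Set Z} (hO : IsOpen O) (hsub : connectedComponent z ⊆ O) :
    ∃ V : Set Z, IsClopen V ∧ z ∈ V ∧ V ⊆ O := by
  rw [connectedComponent_eq_iInter_isClopen] at hsub
  have hcov : Oᶜ ⊆ ⋃ s : {s : Set Z // IsClopen s ∧ z ∈ s}, (↑s : Set Z)ᶜ := by
    intro x hx
    by_contra hx'
    simp only [mem_iUnion, mem_compl_iff, not_exists, not_not] at hx'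
    exact hx (hsub (Set.mem_iInter.2 fun s => hx' s))
  obtain ⟨t, ht⟩ := (hO.isClosed_compl.isCompact).elim_finite_subcover
    (fun s : {s : Set Z // IsClopen s ∧ z ∈ s} => (↑s : Set Z)ᶜ)
    (fun s => s.2.1.1.isOpen_compl) hcov
  refine ⟨⋂ s ∈ t, (↑s : Set Z), isClopen_biInter_finset (fun s _ => s.2.1), ?_, ?_⟩
  · exact Set.mem_iInter₂.2 fun s _ => s.2.2
  · intro x hx
    by_contra hxO
    obtain ⟨s, hs, hxs⟩ := Set.mem_iUnion₂.1 (ht hxO)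
    exact hxs (Set.mem_iInter₂.1 hx s hs)

variable {X : Type*} [MetricSpace X]

/-- small nontrivial connected subsets exist in nontrivial continua -/
lemma my_exists_small_connected {A : Set X} (hA : IsCompact A) (hconn : IsConnected A)
    {a b : X} (ha : a ∈ A) (hb : b ∈ A) {s : ℝ} (hs : 0 < s) (hsd : s < dist a b) :
    ∃ B : Set X, B ⊆ A ∧ IsPreconnected B ∧ a ∈ B ∧ (∀ x ∈ B, dist x a ≤ s) ∧
      ∃ x ∈ B, x ≠ a := by
  haveI : CompactSpace A := isCompact_iff_compactSpace.1 hA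
  haveI : ConnectedSpace A := Subtype.connectedSpace hconn
  set α : A := ⟨a, ha⟩
  set β : A := ⟨b, hb⟩
  set D : Set A := closedBall α s with hD
  haveI : CompactSpace D :=
    isCompact_iff_compactSpace.1 (isClosed_closedBall.isCompact)
  have hzD : α ∈ D := by simp [hD, hs.le]
  set z : D := ⟨α, hzD⟩
  by_cases h : ∃ w ∈ connectedComponent z, w ≠ z
  · obtain ⟨w, hw, hwz⟩ := h
    refine ⟨(fun v : D => (v.1.1 : X)) '' connectedComponent z, ?_, ?_, ?_, ?_, ?_⟩
    · rintro _ ⟨v, _, rfl⟩; exact v.1.2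
    · exact (isPreconnected_connectedComponent).image _
        (continuous_subtype_val.comp continuous_subtype_val).continuousOn
    · exact ⟨z, mem_connectedComponent, rfl⟩
    · rintro _ ⟨v, _, rfl⟩
      have hvd : dist v.1 α ≤ s := mem_closedBall.1 v.2
      simpa [Subtype.dist_eq] using hvd
    · refine ⟨w.1.1, ⟨w, hw, rfl⟩, fun hcon => hwz ?_⟩
      apply Subtype.ext; apply Subtype.ext; exact hcon
  · exfalso
    push_neg at h
    have hccz : connectedComponent z ⊆ (Subtype.val ⁻¹' (ball α s) : Set D) := by
      intro w hw
      have := h w hw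
      subst this
      show dist α α < s
      simpa [mem_ball] using hs
    obtain ⟨V, hV, hzV, hVO⟩ := my_exists_clopen_between z
      (isOpen_ball.preimage continuous_subtype_val) hccz
    obtain ⟨O', hO', hVeq⟩ := isOpen_induced_iff.1 hV.2
    set W : Set A := Subtype.val '' V with hW
    have hWclosed : IsClosed W := ((hV.1.isCompact).image continuous_subtype_val).isClosed
    have hWeq : W = O' ∩ ball α s := by
      ext w
      constructor
      · rintro ⟨v, hv, rfl⟩
        refine ⟨?_, ?_⟩
        · show v.1 ∈ O'
          have : v ∈ Subtype.val ⁻¹' O' := by rw [hVeq]; exact hv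
          exact this
        · exact hVO hv
      · rintro ⟨hw1, hw2⟩
        have hwD : w ∈ D := ball_subset_closedBall hw2
        refine ⟨⟨w, hwD⟩, ?_, rfl⟩
        rw [← hVeq]
        exact hw1
    have hWopen : IsOpen W := by rw [hWeq]; exact hO'.inter isOpen_ball
    have := (isClopen_iff.1 ⟨hWclosed, hWopen⟩)
    rcases this with hempty | huniv
    · have : α ∈ W := ⟨z, hzV, rfl⟩
      rw [hempty] at this; exact this
    · have hβ : β ∈ W := by rw [huniv]; trivial
      rw [hWeq] at hβ
      have : dist β α < s := hβ.2
      rw [Subtype.dist_eq] at this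
      simp only [α, β] at this
      rw [dist_comm] at this
      linarith

/-- diameter comparison via Hausdorff distance -/
lemma my_diam_le {s t : Set X} (hsn : s.Nonempty) (htn : t.Nonempty)
    (hsb : Bornology.IsBounded s) (htb : Bornology.IsBounded t) {e : ℝ}
    (h : hausdorffDist s t < e) : diam s ≤ diam t + 2 * e := by
  have hfin := hausdorffEdist_ne_top_of_nonempty_of_bounded hsn htn hsb htb
  have he : 0 < e := lt_of_le_of_lt hausdorffDist_nonneg h
  have hd : 0 ≤ diam t := diam_nonneg
  refine diam_le_of_forall_dist_le (by linarith) fun x hx y hy => ?_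
  obtain ⟨x', hx', hxx'⟩ := exists_dist_lt_of_hausdorffDist_lt hx h hfin
  obtain ⟨y', hy', hyy'⟩ := exists_dist_lt_of_hausdorffDist_lt hy h hfin
  have h1 : dist x' y' ≤ diam t := dist_le_diam_of_mem htb hx' hy'
  have := dist_triangle4 x x' y' y
  rw [dist_comm y' y] at this
  linarith

lemma my_iterZ_succ {Y : Type*} (g ginv : Y → Y) (h : ∀ x, g (ginv x) = x) (n : ℤ) (x : Y) :
    g (iterZ g ginv n x) = iterZ g ginv (n + 1) x := by
  cases n with
  | ofNat k =>
      have h1 : (Int.ofNat k) + 1 = Int.ofNat (k + 1) := rfl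
      rw [h1]
      show g (g^[k] x) = g^[k + 1] x
      rw [Function.iterate_succ_apply' g k x]
  | negSucc k =>
      cases k with
      | zero =>
          have h1 : (Int.negSucc 0) + 1 = Int.ofNat 0 := rfl
          rw [h1]
          show g (ginv^[1] x) = g^[0] x
          simpa using h x
      | succ m =>
          have h1 : (Int.negSucc (m + 1)) + 1 = Int.negSucc m := rfl
          rw [h1]
          show g (ginv^[m + 2] x) = ginv^[m + 1] x
          rw [Function.iterate_succ_apply' ginv (m + 1) x]
          exact h _

/-- uniform window estimate -/
lemma my_uniform_window {X : Type*} [MetricSpace X] [CompactSpace X] (ψ : ℤ → X → X)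
    (hψ : ∀ n, Continuous (ψ n)) {c : ℝ} (hc : 0 < c) (K : ℕ) :
    ∃ s > 0, ∀ p q : X, dist p q ≤ s → ∀ n : ℤ, n.natAbs ≤ K → dist (ψ n p) (ψ n q) ≤ c := by
  have single : ∀ n : ℤ, ∃ s > 0, ∀ p q : X, dist p q ≤ s → dist (ψ n p) (ψ n q) ≤ c := by
    intro n
    have hu := CompactSpace.uniformContinuous_of_continuous (hψ n)
    rcases Metric.uniformContinuous_iff.1 hu c hc with ⟨δ, hδ, hδ'⟩
    exact ⟨δ / 2, by positivity, fun p q hpq =>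
      le_of_lt (hδ' (lt_of_le_of_lt hpq (by linarith)))⟩
  induction K with
  | zero =>
      rcases single 0 with ⟨s, hs, hsp⟩
      refine ⟨s, hs, fun p q hpq n hn => ?_⟩
      have hn0 : n = 0 := Int.natAbs_eq_zero.1 (Nat.le_zero.1 hn)
      subst hn0; exact hsp p q hpq
  | succ m ih =>
      rcases ih with ⟨s₁, hs₁, h₁⟩
      rcases single ((m + 1 : ℕ) : ℤ) with ⟨s₂, hs₂, h₂⟩
      rcases single (-((m + 1 : ℕ) : ℤ)) with ⟨s₃, hs₃, h₃⟩
      refine ⟨min s₁ (min s₂ s₃), by positivity, fun p q hpq n hn => ?_⟩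
      rcases Nat.lt_or_ge n.natAbs (m + 1) with hlt | hge
      · exact h₁ p q (hpq.trans (min_le_left _ _)) n (Nat.lt_succ_iff.1 hlt)
      · have heq : n.natAbs = m + 1 := le_antisymm hn hge
        rcases Int.natAbs_eq n with he | he
        · rw [he, heq]
          exact h₂ p q (hpq.trans ((min_le_right _ _).trans (min_le_left _ _)))
        · rw [he, heq]
          exact h₃ p q (hpq.trans ((min_le_right _ _).trans (min_le_right _ _)))

end AuxLemmas

section SetLemmas

variable {X : Type*} [MetricSpace X]

lemma inducedC_val (g : X → X) (hg : Continuous g) (A : Continua X) :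
    ((inducedC g hg A).1 : Set X) = g '' (A.1 : Set X) := rfl

lemma inducedC_iterate_val (g : X → X) (hg : Continuous g) (k : ℕ) (A : Continua X) :
    (((inducedC g hg)^[k] A).1 : Set X) = g^[k] '' (A.1 : Set X) := by
  induction k with
  | zero => simp
  | succ m ih =>
      rw [Function.iterate_succ_apply', inducedC_val, ih, ← Set.image_comp,
        ← Function.iterate_succ']

lemma iterZ_inducedC_val (f : X ≃ₜ X) (n : ℤ) (A : Continua X) :
    ((iterZ (inducedC ⇑f f.continuous) (inducedC ⇑f.symm f.symm.continuous) n A).1 : Set X)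
      = iterZ ⇑f ⇑f.symm n '' (A.1 : Set X) := by
  cases n with
  | ofNat k => exact inducedC_iterate_val _ _ k A
  | negSucc k => exact inducedC_iterate_val _ _ (k + 1) A

lemma inducedC_symm_apply (f : X ≃ₜ X) (A : Continua X) :
    inducedC ⇑f f.continuous (inducedC ⇑f.symm f.symm.continuous A) = A := by
  apply Subtype.ext
  apply TopologicalSpace.NonemptyCompacts.ext
  show ⇑f '' (⇑f.symm '' (A.1 : Set X)) = (A.1 : Set X)
  rw [Homeomorph.image_symm, Set.image_preimage_eq _ f.surjective]

lemma continua_dist_eq (A B : Continua X) :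
    dist A B = hausdorffDist (A.1 : Set X) (B.1 : Set X) := rfl

end SetLemmas

/-- If `f` is a cw-expansive homeomorphism of a compact metric space admitting
sequences of non-trivial stable continua `S n` and unstable continua `U n`,
with `d_H(S n, U n) → 0` and diameters bounded below by some `r > 0`, then the
induced map `C(f)` on the hyperspace of continua does not have the shadowing
property. -/
theorem stmt0 {X : Type*} [MetricSpace X] [CompactSpace X] (f : X ≃ₜ X)
    (hcw : ∃ c > 0, ∀ x : X, IsTotallyDisconnected (Ws ⇑f c x ∩ Ws ⇑f.symm c x))
    (S U : ℕ → Continua X)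
    (hSnt : ∀ n, ((S n).1 : Set X).Nontrivial)
    (hUnt : ∀ n, ((U n).1 : Set X).Nontrivial)
    (hSst : ∀ n, Tendsto (fun k : ℕ => Metric.diam ((⇑f)^[k] '' ((S n).1 : Set X)))
      atTop (nhds 0))
    (hUun : ∀ n, Tendsto (fun k : ℕ => Metric.diam ((⇑f.symm)^[k] '' ((U n).1 : Set X)))
      atTop (nhds 0))
    (hd : Tendsto (fun n : ℕ => dist (S n) (U n)) atTop (nhds 0))
    (r : ℝ) (hr : 0 < r)
    (hSdiam : ∀ n, r < Metric.diam ((S n).1 : Set X))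
    (hUdiam : ∀ n, r < Metric.diam ((U n).1 : Set X)) :
    ¬ ShadowingZ (inducedC ⇑f f.continuous) (inducedC ⇑f.symm f.symm.continuous) := by
  obtain ⟨c, hc, hTD⟩ := hcw
  intro hSh
  have hrc : 0 < min r c := lt_min hr hc
  set ε : ℝ := min r c / 8 with hεdef
  have hε : 0 < ε := by positivity
  have hεr : ε ≤ r / 8 := by
    have h := min_le_left r c
    rw [hεdef]; linarith
  have hεc : ε ≤ c / 8 := by
    have h := min_le_right r c
    rw [hεdef]; linarith
  obtain ⟨δ, hδ, hδ'⟩ := hSh ε hε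
  obtain ⟨N, hN⟩ := Metric.tendsto_atTop.1 hd δ hδ
  have hSU : dist (S N) (U N) < δ := by
    have h := hN N le_rfl
    rwa [Real.dist_eq, sub_zero, abs_of_nonneg dist_nonneg] at h
  set F : Continua X → Continua X := inducedC ⇑f f.continuous with hF
  set Fi : Continua X → Continua X := inducedC ⇑f.symm f.symm.continuous with hFi
  set ψ : ℤ → X → X := iterZ ⇑f ⇑f.symm with hψ
  have hFFi : ∀ A, F (Fi A) = A := fun A => inducedC_symm_apply f A
  have hval : ∀ (n : ℤ) (B : Continua X),
      ((iterZ F Fi n B).1 : Set X) = ψ n '' (B.1 : Set X) := by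
    intro n B
    rw [hF, hFi, hψ]
    exact iterZ_inducedC_val f n B
  -- the pseudo-orbit
  have hpo : ∀ n : ℤ,
      dist (F ((fun n : ℤ => iterZ F Fi n (if 0 ≤ n then S N else U N)) n))
        ((fun n : ℤ => iterZ F Fi n (if 0 ≤ n then S N else U N)) (n + 1)) < δ := by
    intro n
    simp only []
    rcases lt_trichotomy n (-1) with hn | hn | hn
    · have h1 : ¬ (0 ≤ n) := by omega
      have h2 : ¬ (0 ≤ n + 1) := by omega
      rw [if_neg h1, if_neg h2, my_iterZ_succ F Fi hFFi n]
      simpa using hδ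
    · subst hn
      have h1 : ¬ (0 ≤ (-1 : ℤ)) := by omega
      have h2 : (0 : ℤ) ≤ -1 + 1 := by omega
      rw [if_neg h1, if_pos h2]
      have e1 : iterZ F Fi (-1) (U N) = Fi (U N) := rfl
      have e2 : iterZ F Fi (-1 + 1) (S N) = S N := rfl
      rw [e1, e2, hFFi, dist_comm]
      exact hSU
    · have h1 : 0 ≤ n := by omega
      have h2 : 0 ≤ n + 1 := by omega
      rw [if_pos h1, if_pos h2, my_iterZ_succ F Fi hFFi n]
      simpa using hδ
  obtain ⟨A, hA⟩ := hδ' _ hpo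
  set As : Set X := (A.1 : Set X) with hAs
  have bdd : ∀ s : Set X, Bornology.IsBounded s :=
    fun s => (isCompact_univ.isBounded).subset (subset_univ s)
  have hAne : As.Nonempty := A.1.nonempty
  have hdistn : ∀ n : ℤ, hausdorffDist (ψ n '' As)
      (ψ n '' (((if 0 ≤ n then S N else U N) : Continua X).1 : Set X)) < ε := by
    intro n
    have h := hA n
    rw [continua_dist_eq, hval n A, hval n _] at h
    exact h
  -- diameter of As is large
  have h0 : hausdorffDist As ((S N).1 : Set X) < ε := by
    have h := hdistn 0
    rw [if_pos (le_refl (0 : ℤ))] at h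
    have hid : ∀ s : Set X, ψ (0 : ℤ) '' s = s := by
      intro s
      show (⇑f)^[0] '' s = s
      simp
    rwa [hid, hid] at h
  have hdiamA : r - 2 * ε < diam As := by
    have h1 : diam ((S N).1 : Set X) ≤ diam As + 2 * ε :=
      my_diam_le (S N).1.nonempty hAne (bdd _) (bdd _)
        (by rwa [hausdorffDist_comm] at h0)
    have h2 := hSdiam N
    linarith
  -- tails
  obtain ⟨K₁, hK₁⟩ := Metric.tendsto_atTop.1 (hSst N) (c / 2) (by positivity)
  obtain ⟨K₂, hK₂⟩ := Metric.tendsto_atTop.1 (hUun N) (c / 2) (by positivity)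
  have hK₁' : ∀ k, K₁ ≤ k → diam ((⇑f)^[k] '' ((S N).1 : Set X)) < c / 2 := by
    intro k hk
    have h := hK₁ k hk
    rwa [Real.dist_eq, sub_zero, abs_of_nonneg diam_nonneg] at h
  have hK₂' : ∀ k, K₂ ≤ k → diam ((⇑f.symm)^[k] '' ((U N).1 : Set X)) < c / 2 := by
    intro k hk
    have h := hK₂ k hk
    rwa [Real.dist_eq, sub_zero, abs_of_nonneg diam_nonneg] at h
  set K : ℕ := max K₁ K₂ with hK
  have htail : ∀ n : ℤ, K ≤ n.natAbs → diam (ψ n '' As) ≤ c := by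
    intro n hn
    cases n with
    | ofNat k =>
        have hk : K₁ ≤ k := le_trans (le_max_left _ _) hn
        have hpos : (0 : ℤ) ≤ Int.ofNat k := Int.ofNat_nonneg k
        have h := hdistn (Int.ofNat k)
        rw [if_pos hpos] at h
        have himg : ∀ s : Set X, ψ (Int.ofNat k) '' s = (⇑f)^[k] '' s := fun s => rfl
        rw [himg, himg] at h
        rw [himg]
        have hle := my_diam_le (hAne.image _) ((S N).1.nonempty.image _) (bdd _) (bdd _) h
        have h2 := hK₁' k hk
        linarith
    | negSucc k =>
        have hk : K₂ ≤ k + 1 := le_trans (le_max_right _ _) hn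
        have hneg : ¬ ((0 : ℤ) ≤ Int.negSucc k) := (Int.negSucc_lt_zero k).not_ge
        have h := hdistn (Int.negSucc k)
        rw [if_neg hneg] at h
        have himg : ∀ s : Set X, ψ (Int.negSucc k) '' s = (⇑f.symm)^[k + 1] '' s :=
          fun s => rfl
        rw [himg, himg] at h
        rw [himg]
        have hle := my_diam_le (hAne.image _) ((U N).1.nonempty.image _) (bdd _) (bdd _) h
        have h2 := hK₂' (k + 1) hk
        linarith
  -- uniform window
  have hψcont : ∀ n : ℤ, Continuous (ψ n) := by
    intro n
    cases n with
    | ofNat k => exact f.continuous.iterate k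
    | negSucc k => exact f.symm.continuous.iterate (k + 1)
  obtain ⟨s₀, hs₀, hwin⟩ := my_uniform_window ψ hψcont hc K
  have hγ : 0 < r - 2 * ε := by linarith
  set s : ℝ := min (s₀ / 2) ((r - 2 * ε) / 4) with hsdef
  have hspos : 0 < s := lt_min (by positivity) (by positivity)
  have hslt : s < diam As := lt_of_le_of_lt (min_le_right _ _) (by linarith)
  have hab : ∃ a ∈ As, ∃ b ∈ As, s < dist a b := by
    by_contra hcon
    push_neg at hcon
    have h := diam_le_of_forall_dist_le hspos.le fun x hx y hy => hcon x hx y hy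
    linarith
  obtain ⟨a, ha, b, hb, habs⟩ := hab
  obtain ⟨B, hBA, hBpre, haB, hBball, x₀, hx₀B, hx₀a⟩ :=
    my_exists_small_connected A.1.isCompact A.2 ha hb hspos habs
  have hBd : ∀ n : ℤ, diam (ψ n '' B) ≤ c := by
    intro n
    rcases le_or_gt (K : ℕ) n.natAbs with hge | hlt
    · exact le_trans (diam_mono (image_mono hBA) (bdd _)) (htail n hge)
    · refine diam_le_of_forall_dist_le hc.le ?_
      rintro _ ⟨p, hp, rfl⟩ _ ⟨q, hq, rfl⟩
      refine hwin p q ?_ n hlt.le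
      have h1 := hBball p hp
      have h2 := hBball q hq
      have h3 : dist p q ≤ dist p a + dist q a := dist_triangle_right p q a
      have hs2 : s ≤ s₀ / 2 := min_le_left _ _
      linarith
  have hBsub : B ⊆ Ws ⇑f c a ∩ Ws ⇑f.symm c a := by
    intro y hy
    refine ⟨fun k => ?_, fun k => ?_⟩
    · have hmem1 : (⇑f)^[k] y ∈ ψ (Int.ofNat k) '' B := ⟨y, hy, rfl⟩
      have hmem2 : (⇑f)^[k] a ∈ ψ (Int.ofNat k) '' B := ⟨a, haB, rfl⟩
      exact le_trans (dist_le_diam_of_mem (bdd _) hmem1 hmem2) (hBd _)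
    · cases k with
      | zero =>
          simp only [Function.iterate_zero, id_eq]
          have h0 := hBd 0
          have hid : ψ (0 : ℤ) '' B = B := by
            show (⇑f)^[0] '' B = B
            simp
          rw [hid] at h0
          exact le_trans (dist_le_diam_of_mem (bdd _) hy haB) h0
      | succ m =>
          have hmem1 : (⇑f.symm)^[m + 1] y ∈ ψ (Int.negSucc m) '' B := ⟨y, hy, rfl⟩
          have hmem2 : (⇑f.symm)^[m + 1] a ∈ ψ (Int.negSucc m) '' B := ⟨a, haB, rfl⟩
          exact le_trans (dist_le_diam_of_mem (bdd _) hmem1 hmem2) (hBd _)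
  exact hx₀a ((hTD a B hBsub hBpre) hx₀B haB)
end

section
/- Let X be a compact metric space, p ∈ X, and (X_n)_{n∈ℕ} a sequence of compact connected subsets of X with X = ⋃_{n∈ℕ} X_n, X_n ∩ X_m = {p} for all n ≠ m, and diam(X_n) → 0 as n → ∞; assume moreover that for a,b in distinct pieces X_n, X_m the metric satisfies d(a,b) = d(a,p) + d(p,b). Let h: X → X be a homeomorphism with h(X_n) = X_n for every n, such that each restriction h|X_n has the shadowing property and {p} is a quasi-attractor fixed point of h|X_n for every n ∈ ℕ. Then h has the shadowing property and {p} is a quasi-attractor fixed point of h. -/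
open Set Metric Filter Function

set_option linter.unusedSectionVars false
set_option maxHeartbeats 1000000

lemma iterZ_fixed {X : Type*} {g ginv : X → X} {p : X} (hg : g p = p) (hginv : ginv p = p) :
    ∀ n : ℤ, iterZ g ginv n p = p := by
  intro n
  cases n with
  | ofNat n => exact Function.iterate_fixed hg n
  | negSucc n => exact Function.iterate_fixed hginv (n+1)

open Set Metric Filter Function

section helpers
variable {X : Type*} [MetricSpace X] {p : X} {Xs : ℕ → Set X}

lemma hp_mem (hint : ∀ m n, m ≠ n → Xs m ∩ Xs n = {p}) (k : ℕ) : p ∈ Xs k := by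
  have h1 := hint k (k+1) (by omega)
  have : p ∈ Xs k ∩ Xs (k+1) := h1 ▸ rfl
  exact this.1

lemma huniq (hint : ∀ m n, m ≠ n → Xs m ∩ Xs n = {p}) {z : X} {a b : ℕ}
    (hz : z ≠ p) (ha : z ∈ Xs a) (hb : z ∈ Xs b) : a = b := by
  by_contra hab
  have : z ∈ Xs a ∩ Xs b := ⟨ha, hb⟩
  rw [hint a b hab] at this
  exact hz this

lemma hball (hcover : (⋃ n, Xs n) = (univ : Set X))
    (hint : ∀ m n, m ≠ n → Xs m ∩ Xs n = {p})
    (hadd : ∀ m n, m ≠ n → ∀ a ∈ Xs m, ∀ b ∈ Xs n, dist a b = dist a p + dist p b)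
    {k : ℕ} {z w : X} (hz : z ∈ Xs k) (hw : dist w z < dist z p) : w ∈ Xs k := by
  have : w ∈ ⋃ n, Xs n := hcover ▸ mem_univ w
  obtain ⟨_, ⟨m, rfl⟩, hwm⟩ := this
  by_cases hwk : w ∈ Xs k
  · exact hwk
  · exfalso
    have hmk : m ≠ k := fun e => hwk (e ▸ hwm)
    have := hadd m k hmk w hwm z hz
    have h3 : (0:ℝ) ≤ dist w p := dist_nonneg
    have h2 : dist p z ≤ dist w z := by rw [this]; linarith
    rw [dist_comm p z] at h2
    linarith

lemma hopenpiece (hcover : (⋃ n, Xs n) = (univ : Set X))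
    (hint : ∀ m n, m ≠ n → Xs m ∩ Xs n = {p})
    (hadd : ∀ m n, m ≠ n → ∀ a ∈ Xs m, ∀ b ∈ Xs n, dist a b = dist a p + dist p b)
    (k : ℕ) : IsOpen (Xs k \ {p}) := by
  rw [Metric.isOpen_iff]
  rintro z ⟨hzk, hzp⟩
  have hzp' : z ≠ p := hzp
  refine ⟨dist z p, dist_pos.2 hzp', fun w hw => ?_⟩
  rw [mem_ball] at hw
  refine ⟨hball hcover hint hadd hzk hw, ?_⟩
  intro hw'
  rw [mem_singleton_iff] at hw'
  subst hw'
  rw [dist_comm] at hw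
  exact lt_irrefl _ hw

lemma hmemiff (h : X ≃ₜ X) (hinv : ∀ n, ⇑h '' Xs n = Xs n) {z : X} {k : ℕ} :
    z ∈ Xs k ↔ h z ∈ Xs k := by
  constructor
  · intro hz; rw [← hinv k]; exact mem_image_of_mem _ hz
  · intro hz
    rw [← hinv k] at hz
    obtain ⟨w, hw, hwz⟩ := hz
    rwa [← h.injective hwz]

end helpers

lemma qa_main {X : Type*} [MetricSpace X] (p : X) (Xs : ℕ → Set X)
    (hXc : ∀ n, IsCompact (Xs n))
    (hcover : (⋃ n, Xs n) = Set.univ)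
    (hint : ∀ m n, m ≠ n → Xs m ∩ Xs n = {p})
    (hdiam : Tendsto (fun n : ℕ => Metric.diam (Xs n)) atTop (nhds 0))
    (hadd : ∀ m n, m ≠ n → ∀ a ∈ Xs m, ∀ b ∈ Xs n, dist a b = dist a p + dist p b)
    (h : X ≃ₜ X) (hinv : ∀ n, ⇑h '' Xs n = Xs n)
    (hfix : h p = p)
    (hqa : ∀ n, QuasiAttractorOn ⇑h (Xs n) {p}) :
    QuasiAttractor ⇑h {p} := by
  refine ⟨isCompact_singleton, by rw [image_singleton, hfix], ?_⟩
  intro U hU hpU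
  rw [singleton_subset_iff] at hpU
  obtain ⟨ε, hε, hballU⟩ := Metric.isOpen_iff.1 hU p hpU
  obtain ⟨N, hN⟩ := (eventually_atTop.1 (hdiam.eventually_lt_const hε))
  -- small pieces are inside U
  have hsmall : ∀ k, N ≤ k → Xs k ⊆ U := by
    intro k hk z hz
    apply hballU
    rw [mem_ball]
    calc dist z p ≤ Metric.diam (Xs k) :=
          Metric.dist_le_diam_of_mem (hXc k).isBounded hz (hp_mem hint k)
      _ < ε := hN k hk
  -- per-piece quasi-attractor sets
  have hVn : ∀ n, ∃ Vn : Set X, IsOpen Vn ∧ {p} ⊆ Vn ∧ Vn ∩ Xs n ⊆ U ∧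
      closure (⇑h '' (Vn ∩ Xs n)) ∩ Xs n ⊆ Vn := fun n => (hqa n).2.2.2 U hU (by simpa using hpU)
  choose Vn hVno hVnp hVnU hVncl using hVn
  -- small ball around p inside U and all Vn, n < N
  have hWo : IsOpen (U ∩ ⋂ n ∈ Finset.range N, Vn n) :=
    hU.inter (isOpen_biInter_finset (fun n _ => hVno n))
  have hWp : p ∈ U ∩ ⋂ n ∈ Finset.range N, Vn n := by
    refine ⟨hpU, ?_⟩
    simp only [mem_iInter]
    intro n _
    exact hVnp n rfl
  obtain ⟨r, hr, hrW⟩ := Metric.isOpen_iff.1 hWo p hWp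
  set V : Set X := ball p r ∪ (⋃ n ∈ {n : ℕ | n < N}, ((Vn n ∩ Xs n) \ {p})) ∪
      (⋃ n ∈ {n : ℕ | N ≤ n}, (Xs n \ {p})) with hVdef
  have hVo : IsOpen V := by
    refine (isOpen_ball.union (isOpen_biUnion fun n _ => ?_)).union
      (isOpen_biUnion fun n _ => hopenpiece hcover hint hadd n)
    have : (Vn n ∩ Xs n) \ {p} = Vn n ∩ (Xs n \ {p}) := by
      ext z; simp only [mem_diff, mem_inter_iff, mem_singleton_iff]; tauto
    rw [this]
    exact (hVno n).inter (hopenpiece hcover hint hadd n)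
  have hpV : p ∈ V := Or.inl (Or.inl (mem_ball_self hr))
  have hVU : V ⊆ U := by
    rintro z (( hz | hz) | hz)
    · exact (hrW hz).1
    · obtain ⟨n, _, hz1, _⟩ := mem_iUnion₂.1 hz
      exact hVnU n hz1
    · obtain ⟨n, hn, hz1, _⟩ := mem_iUnion₂.1 hz
      exact hsmall n hn hz1
  refine ⟨V, hVo, singleton_subset_iff.2 hpV, hVU, ?_⟩
  rw [← Homeomorph.image_closure]
  rintro _ ⟨z, hz, rfl⟩
  -- z ∈ closure V; find its piece
  have : z ∈ ⋃ n, Xs n := hcover ▸ mem_univ z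
  obtain ⟨_, ⟨k, rfl⟩, hzk⟩ := this
  by_cases hzp : z = p
  · subst hzp; rw [hfix]; exact hpV
  have hhzp : h z ≠ p := fun e => hzp (h.injective (by rw [e, hfix]))
  have hhzk : h z ∈ Xs k := (hmemiff h hinv).1 hzk
  by_cases hkN : k < N
  · -- big piece: show z ∈ closure (Vn k ∩ Xs k)
    have hzcl : z ∈ closure (Vn k ∩ Xs k) := by
      rw [Metric.mem_closure_iff]
      intro s hs
      have hdzp : 0 < dist z p := dist_pos.2 hzp
      obtain ⟨w, hw, hwd⟩ := Metric.mem_closure_iff.1 hz (min s (dist z p)) (lt_min hs hdzp)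
      have hwd1 : dist z w < s := hwd.trans_le (min_le_left _ _)
      have hwd2 : dist w z < dist z p := by rw [dist_comm]; exact hwd.trans_le (min_le_right _ _)
      have hwk : w ∈ Xs k := hball hcover hint hadd hzk hwd2
      have hwp : w ≠ p := by
        intro e; subst e
        rw [dist_comm] at hwd2; exact lt_irrefl _ hwd2
      refine ⟨w, ⟨?_, hwk⟩, hwd1⟩
      rcases hw with (hw | hw) | hw
      · have := hrW hw
        have := this.2
        simp only [mem_iInter] at this
        exact this k (Finset.mem_range.2 hkN)
      · obtain ⟨m, _, hw1, _⟩ := mem_iUnion₂.1 hw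
        have : m = k := huniq hint hwp hw1.2 hwk
        exact this ▸ hw1.1
      · obtain ⟨m, hm, hw1, hw2⟩ := mem_iUnion₂.1 hw
        have hm' : N ≤ m := hm
        exact absurd (huniq hint hwp hw1 hwk) (by omega)
    have : h z ∈ closure (⇑h '' (Vn k ∩ Xs k)) := by
      rw [← Homeomorph.image_closure]
      exact mem_image_of_mem _ hzcl
    have hzVk : h z ∈ Vn k := hVncl k ⟨this, hhzk⟩
    exact Or.inl (Or.inr (mem_iUnion₂.2 ⟨k, hkN, ⟨hzVk, hhzk⟩, hhzp⟩))
  · exact Or.inr (mem_iUnion₂.2 ⟨k, show N ≤ k from not_lt.1 hkN, hhzk, hhzp⟩)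

/-- Star union: if a compact metric space `X` is the union of compact connected
pieces `Xs n` meeting pairwise exactly at `p`, with diameters tending to `0` and
the metric additive across distinct pieces, and `h` is a homeomorphism preserving
each piece whose restriction to each piece has the shadowing property with `{p}` a
quasi-attractor fixed point, then `h` has the shadowing property and `{p}` is a
quasi-attractor fixed point of `h`. -/
theorem stmt8 {X : Type*} [MetricSpace X] [CompactSpace X] (p : X) (Xs : ℕ → Set X)
    (hXc : ∀ n, IsCompact (Xs n)) (hXconn : ∀ n, IsConnected (Xs n))
    (hcover : (⋃ n, Xs n) = Set.univ)
    (hint : ∀ m n, m ≠ n → Xs m ∩ Xs n = {p})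
    (hdiam : Tendsto (fun n : ℕ => Metric.diam (Xs n)) atTop (nhds 0))
    (hadd : ∀ m n, m ≠ n → ∀ a ∈ Xs m, ∀ b ∈ Xs n, dist a b = dist a p + dist p b)
    (h : X ≃ₜ X) (hinv : ∀ n, ⇑h '' Xs n = Xs n)
    (hsh : ∀ n, ShadowingZOn ⇑h ⇑h.symm (Xs n))
    (hfix : h p = p)
    (hqa : ∀ n, QuasiAttractorOn ⇑h (Xs n) {p}) :
    ShadowingZ ⇑h ⇑h.symm ∧ Function.IsFixedPt ⇑h p ∧ QuasiAttractor ⇑h {p} := by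
  have hQA := qa_main p Xs hXc hcover hint hdiam hadd h hinv hfix hqa
  have hsymmfix : h.symm p = p := by
    conv_lhs => rw [← hfix]
    exact h.symm_apply_apply p
  have hiterp : ∀ n : ℤ, iterZ (⇑h) (⇑h.symm) n p = p := iterZ_fixed hfix hsymmfix
  refine ⟨?_, hfix, hQA⟩
  intro ε hε
  set ε2 : ℝ := ε / 2 with hε2def
  have hε2 : 0 < ε2 := by positivity
  obtain ⟨N, hN⟩ := eventually_atTop.1 (hdiam.eventually_lt_const hε2)
  choose δc hδcpos hδcspec using fun n => hsh n ε2 hε2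
  set δ' : ℝ := (Finset.range (N+1)).inf' ⟨0, by simp⟩ δc with hδ'def
  have hδ'pos : 0 < δ' := by
    obtain ⟨b, _, hb⟩ := Finset.exists_mem_eq_inf' (s := Finset.range (N+1)) ⟨0, by simp⟩ δc
    exact (hδcpos b).trans_eq hb.symm
  have hδ'le : ∀ k, k < N + 1 → δ' ≤ δc k := fun k hk =>
    Finset.inf'_le _ (Finset.mem_range.2 hk)
  set η : ℝ := min ε2 (δ' / 2) with hηdef
  have hηpos : 0 < η := lt_min hε2 (by positivity)
  have hηε2 : η ≤ ε2 := min_le_left _ _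
  have hηδ : η ≤ δ' / 2 := min_le_right _ _
  obtain ⟨V, hVo, hpV', hVball, hVcl⟩ :=
    hQA.2.2 (ball p η) isOpen_ball (singleton_subset_iff.2 (mem_ball_self hηpos))
  have hpV : p ∈ V := hpV' rfl
  have hKc : IsCompact (closure (⇑h '' V)) := isClosed_closure.isCompact
  obtain ⟨γ, hγ, hγV⟩ := hKc.exists_thickening_subset_open hVo hVcl
  obtain ⟨r, hr, hrV⟩ := Metric.isOpen_iff.1 hVo p hpV
  set δ : ℝ := min (min γ r) (δ' / 2) with hδdef
  have hδpos : 0 < δ := lt_min (lt_min hγ hr) (by positivity)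
  have hδγ : δ ≤ γ := (min_le_left _ _).trans (min_le_left _ _)
  have hδr : δ ≤ r := (min_le_left _ _).trans (min_le_right _ _)
  have hδδ' : δ ≤ δ' / 2 := min_le_right _ _
  refine ⟨δ, hδpos, ?_⟩
  intro x hx
  -- trap forward
  have hstep : ∀ n : ℤ, x n ∈ V → x (n + 1) ∈ V := by
    intro n hn
    apply hγV
    rw [Metric.mem_thickening_iff]
    exact ⟨h (x n), subset_closure (mem_image_of_mem _ hn),
      by rw [dist_comm]; exact (hx n).trans_le hδγ⟩
  have hup : ∀ a b : ℤ, a ≤ b → x a ∈ V → x b ∈ V := by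
    intro a b hab ha
    exact Int.le_induction ha (fun n _ hn => hstep n hn) b hab
  have hnear : ∀ n : ℤ, x n ∈ V → dist (x n) p < η := fun n hn => mem_ball.1 (hVball hn)
  have hjump : ∀ n : ℤ, (¬ ∃ k, x n ∈ Xs k ∧ x (n + 1) ∈ Xs k) → x (n + 1) ∈ V := by
    intro n hj
    have h1 : x n ∈ ⋃ k, Xs k := hcover ▸ mem_univ _
    have h2 : x (n + 1) ∈ ⋃ k, Xs k := hcover ▸ mem_univ _
    obtain ⟨_, ⟨a, rfl⟩, ha⟩ := h1
    obtain ⟨_, ⟨b, rfl⟩, hb⟩ := h2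
    have hab : a ≠ b := fun e => hj ⟨a, ha, e ▸ hb⟩
    have hha : h (x n) ∈ Xs a := (hmemiff h hinv).1 ha
    have he := hadd a b hab (h (x n)) hha (x (n + 1)) hb
    have : dist p (x (n + 1)) < r := by
      have := hx n
      rw [he] at this
      have := dist_nonneg (x := h (x n)) (y := p)
      linarith [(hx n).trans_le hδr, (le_of_eq he.symm : _)]
    apply hrV
    rw [mem_ball, dist_comm]
    have hxx := hx n
    rw [he] at hxx
    have h3 : dist p (x (n+1)) < δ := by
      have := dist_nonneg (x := h (x n)) (y := p); linarith
    exact h3.trans_le hδr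
  have hcons : ∀ n : ℤ, x n ∉ V → x (n + 1) ∉ V →
      ∃ k, x n ∈ Xs k ∧ x (n + 1) ∈ Xs k := by
    intro n h1 h2
    by_contra hj
    exact h2 (hjump n hj)
  by_cases hall : ∀ n : ℤ, x n ∈ V
  · refine ⟨p, fun n => ?_⟩
    rw [hiterp, dist_comm]
    calc dist (x n) p < η := hnear n (hall n)
      _ ≤ ε2 := hηε2
      _ < ε := by rw [hε2def]; linarith
  · push_neg at hall
    obtain ⟨n0, hn0⟩ := hall
    by_cases hsome : ∃ n1 : ℤ, x n1 ∈ V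
    · -- Case 2b : greatest element m of {n | x n ∉ V}
      obtain ⟨n1, hn1⟩ := hsome
      obtain ⟨m, hmS, hmax⟩ := Int.exists_greatest_of_bdd
        (P := fun n => x n ∉ V)
        ⟨n1, fun z hz => by
          by_contra hzn
          exact hz (hup n1 z (by omega) hn1)⟩
        ⟨n0, hn0⟩
      have hbelow : ∀ n : ℤ, n ≤ m → x n ∉ V := fun n hn hv => hmS (hup n m hn hv)
      have hxnp : ∀ n : ℤ, n ≤ m → x n ≠ p := fun n hn e => hbelow n hn (e ▸ hpV)
      have hafter : ∀ n : ℤ, m < n → x n ∈ V := by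
        intro n hn
        by_contra hv
        exact absurd (hmax n hv) (by omega)
      obtain ⟨_, ⟨k, rfl⟩, hxmk⟩ := (show x m ∈ ⋃ j, Xs j from hcover ▸ mem_univ _)
      have hpiece : ∀ n : ℤ, n ≤ m → x n ∈ Xs k := by
        have key : ∀ j : ℕ, x (m - j) ∈ Xs k := by
          intro j
          induction j with
          | zero => simpa using hxmk
          | succ j ih =>
            obtain ⟨k', h1, h2⟩ := hcons (m - (j + 1 : ℕ))
              (hbelow _ (by push_cast; omega)) (hbelow _ (by push_cast; omega))
            have e : (m - (j + 1 : ℕ)) + 1 = m - (j : ℕ) := by push_cast; ring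
            rw [e] at h2
            have hk' : k' = k := huniq hint (hxnp _ (by push_cast; omega)) h2 ih
            exact hk' ▸ h1
        intro n hn
        have e : m - ((m - n).toNat : ℤ) = n := by omega
        have := key (m - n).toNat
        rwa [e] at this
      by_cases hkN : k < N
      · -- shadow with piece k using modified pseudo-orbit
        have hδck : δ' ≤ δc k := hδ'le k (by omega)
        set x' : ℤ → X := fun n => if n ≤ m then x n else p with hx'def
        have hx'mem : ∀ n : ℤ, x' n ∈ Xs k := by
          intro n
          by_cases hn : n ≤ m
          · simpa [hx'def, hn] using hpiece n hn
          · simpa [hx'def, hn] using hp_mem hint k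
        have hx'ps : ∀ n : ℤ, dist (h (x' n)) (x' (n + 1)) < δc k := by
          intro n
          by_cases hn1 : n + 1 ≤ m
          · have hn : n ≤ m := by omega
            simp only [hx'def, if_pos hn, if_pos hn1]
            exact (hx n).trans_le (by linarith)
          · by_cases hn : n ≤ m
            · have hnm : n = m := by omega
              rw [hnm]
              simp only [hx'def, if_pos le_rfl, if_neg (show ¬ m + 1 ≤ m by omega)]
              have h1 : dist (x (m + 1)) p < η := hnear _ (hafter _ (by omega))
              calc dist (h (x m)) p ≤ dist (h (x m)) (x (m + 1)) + dist (x (m + 1)) p :=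
                    dist_triangle _ _ _
                _ < δ + η := add_lt_add (hx m) h1
                _ ≤ δ' / 2 + δ' / 2 := add_le_add hδδ' hηδ
                _ = δ' := by ring
                _ ≤ δc k := hδck
            · simp only [hx'def, if_neg hn, if_neg hn1, hfix, dist_self]
              exact hδcpos k
        obtain ⟨y, hy, hys⟩ := hδcspec k x' hx'mem hx'ps
        refine ⟨y, fun n => ?_⟩
        by_cases hn : n ≤ m
        · have := hys n
          rw [hx'def] at this
          simp only [if_pos hn] at this
          calc dist (iterZ (⇑h) (⇑h.symm) n y) (x n) < ε2 := this
            _ < ε := by rw [hε2def]; linarith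
        · have h1 := hys n
          rw [hx'def] at h1
          simp only [if_neg hn] at h1
          have h2 : dist (x n) p < η := hnear n (hafter n (by omega))
          calc dist (iterZ (⇑h) (⇑h.symm) n y) (x n)
              ≤ dist (iterZ (⇑h) (⇑h.symm) n y) p + dist p (x n) := dist_triangle _ _ _
            _ < ε2 + η := add_lt_add h1 (by rwa [dist_comm])
            _ ≤ ε2 + ε2 := by linarith
            _ = ε := by rw [hε2def]; ring
      · -- small piece : shadow by p
        refine ⟨p, fun n => ?_⟩
        rw [hiterp, dist_comm]
        by_cases hn : n ≤ m
        · calc dist (x n) p ≤ Metric.diam (Xs k) :=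
              Metric.dist_le_diam_of_mem (hXc k).isBounded (hpiece n hn) (hp_mem hint k)
            _ < ε2 := hN k (by omega)
            _ < ε := by rw [hε2def]; linarith
        · calc dist (x n) p < η := hnear n (hafter n (by omega))
            _ ≤ ε2 := hηε2
            _ < ε := by rw [hε2def]; linarith
    · -- Case 2a : never in V
      push_neg at hsome
      have hxnp : ∀ n : ℤ, x n ≠ p := fun n e => hsome n (e ▸ hpV)
      obtain ⟨_, ⟨k, rfl⟩, hx0⟩ := (show x 0 ∈ ⋃ j, Xs j from hcover ▸ mem_univ _)
      have hpiece : ∀ n : ℤ, x n ∈ Xs k := by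
        intro n
        induction n using Int.induction_on with
        | zero => exact hx0
        | succ i ih =>
          obtain ⟨k', h1, h2⟩ := hcons i (hsome i) (hsome (i + 1))
          have hk' : k' = k := huniq hint (hxnp i) h1 ih
          exact hk' ▸ h2
        | pred i ih =>
          obtain ⟨k', h1, h2⟩ := hcons (-(i : ℤ) - 1) (hsome _) (hsome _)
          have e : (-(i : ℤ) - 1) + 1 = -(i : ℤ) := by ring
          rw [e] at h2
          have hk' : k' = k := huniq hint (hxnp _) h2 ih
          exact hk' ▸ h1
      by_cases hkN : k < N
      · have hδck : δ' ≤ δc k := hδ'le k (by omega)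
        obtain ⟨y, hy, hys⟩ := hδcspec k x hpiece (fun n => (hx n).trans_le (by linarith))
        exact ⟨y, fun n => (hys n).trans (by rw [hε2def]; linarith)⟩
      · refine ⟨p, fun n => ?_⟩
        rw [hiterp, dist_comm]
        calc dist (x n) p ≤ Metric.diam (Xs k) :=
            Metric.dist_le_diam_of_mem (hXc k).isBounded (hpiece n) (hp_mem hint k)
          _ < ε2 := hN k (by omega)
          _ < ε := by rw [hε2def]; linarith
end

section
/- If (X,f) is a simple dynamical system, where f is a homeomorphism of a compact metric space X, then f has the shadowing property. -/
open Set Metric Filter Function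

section SimpleShadowHelpers

variable {X : Type*}

lemma simpleShadow.iterZ_eq [TopologicalSpace X] (f : X ≃ₜ X) (n : ℤ) :
    iterZ ⇑f ⇑f.symm n = ⇑(f.toEquiv ^ n) := by
  cases n with
  | ofNat n =>
    show (⇑f)^[n] = _
    rw [show ((Int.ofNat n : ℤ)) = (n : ℤ) from rfl, zpow_natCast, Equiv.Perm.coe_pow]
    rfl
  | negSucc n =>
    show (⇑f.symm)^[n+1] = _
    rw [zpow_negSucc, ← inv_pow, Equiv.Perm.coe_pow]
    congr 1

lemma simpleShadow.zpow_coe_nonneg [TopologicalSpace X] (f : X ≃ₜ X) (m : ℤ) (h : 0 ≤ m) :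
    ⇑(f.toEquiv ^ m) = (⇑f)^[m.toNat] := by
  conv_lhs => rw [← Int.toNat_of_nonneg h]
  rw [zpow_natCast, Equiv.Perm.coe_pow]
  rfl

lemma simpleShadow.zpow_coe_nonpos [TopologicalSpace X] (f : X ≃ₜ X) (m : ℤ) (h : m ≤ 0) :
    ⇑(f.toEquiv ^ m) = (⇑f.symm)^[(-m).toNat] := by
  have : f.toEquiv ^ m = (f.toEquiv ^ (-m))⁻¹ := by
    rw [← zpow_neg, neg_neg]
  rw [this, ← Int.toNat_of_nonneg (neg_nonneg.2 h), zpow_natCast, ← inv_pow,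
    Equiv.Perm.coe_pow]
  rfl

lemma simpleShadow.symm_fixed [TopologicalSpace X] (f : X ≃ₜ X) {c : X} (h : f c = c) :
    f.symm c = c := by
  conv_lhs => rw [← h]
  exact f.symm_apply_apply c

lemma simpleShadow.iterZ_fixed [TopologicalSpace X] (f : X ≃ₜ X) {c : X} (h : f c = c)
    (n : ℤ) : iterZ ⇑f ⇑f.symm n c = c := by
  cases n with
  | ofNat n => exact Function.iterate_fixed h n
  | negSucc n => exact Function.iterate_fixed (simpleShadow.symm_fixed f h) (n + 1)

lemma simpleShadow.track [MetricSpace X] {g : X → X} (hg : UniformContinuous g) :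
    ∀ T : ℕ, ∀ η > (0:ℝ), ∃ δ > (0:ℝ), ∀ x : ℕ → X,
      (∀ n, dist (g (x n)) (x (n+1)) < δ) → ∀ k ≤ T, dist (g^[k] (x 0)) (x k) < η := by
  intro T
  induction T with
  | zero =>
    intro η hη
    exact ⟨η, hη, fun x _ k hk => by
      interval_cases k; simpa using hη⟩
  | succ T ih =>
    intro η hη
    obtain ⟨γ, hγ, hγ'⟩ := Metric.uniformContinuous_iff.1 hg (η/2) (by positivity)
    obtain ⟨δ', hδ', hδ''⟩ := ih (min γ η) (by positivity)
    refine ⟨min δ' (η/2), by positivity, fun x hx k hk => ?_⟩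
    rcases Nat.lt_or_ge k (T+1) with h | h
    · exact lt_of_lt_of_le (hδ'' x (fun n => (hx n).trans_le (min_le_left _ _)) k
        (Nat.lt_succ_iff.1 h)) (min_le_right _ _)
    · have hk' : k = T + 1 := le_antisymm hk h
      subst hk'
      have h1 : dist (g^[T] (x 0)) (x T) < γ :=
        (hδ'' x (fun n => (hx n).trans_le (min_le_left _ _)) T le_rfl).trans_le (min_le_left _ _)
      calc dist (g^[T+1] (x 0)) (x (T+1))
          ≤ dist (g (g^[T] (x 0))) (g (x T)) + dist (g (x T)) (x (T+1)) := by
            rw [Function.iterate_succ_apply']; exact dist_triangle _ _ _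
        _ < η/2 + η/2 := add_lt_add (hγ' h1) ((hx T).trans_le (min_le_right _ _))
        _ = η := by ring

lemma simpleShadow.iter_mem {g : X → X} {V : Set X} (hV : g '' V ⊆ V) :
    ∀ k {x}, x ∈ V → g^[k] x ∈ V := by
  intro k
  induction k with
  | zero => intro x hx; simpa using hx
  | succ k ih =>
    intro x hx
    rw [Function.iterate_succ_apply']
    exact hV ⟨_, ih hx, rfl⟩

lemma simpleShadow.exists_uniform_time [TopologicalSpace X] {g : X → X} (hg : Continuous g)
    {K V : Set X} (hK : IsCompact K) (hV : IsOpen V) (hinv : g '' V ⊆ V)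
    (h : ∀ x ∈ K, ∃ n : ℕ, g^[n] x ∈ V) : ∃ M : ℕ, ∀ x ∈ K, g^[M] x ∈ V := by
  obtain ⟨t, ht⟩ := hK.elim_finite_subcover (fun n : ℕ => g^[n] ⁻¹' V)
    (fun n => (hV.preimage (hg.iterate n))) (fun x hx => by
      obtain ⟨n, hn⟩ := h x hx; exact mem_iUnion.2 ⟨n, hn⟩)
  refine ⟨t.sup id, fun x hx => ?_⟩
  obtain ⟨n, hn, hn'⟩ := mem_iUnion₂.1 (ht hx)
  have hle : n ≤ t.sup id := Finset.le_sup (f := id) hn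
  have : g^[t.sup id - n + n] x ∈ V := by
    rw [Function.iterate_add_apply]
    exact simpleShadow.iter_mem hinv _ hn'
  rwa [Nat.sub_add_cancel hle] at this

end SimpleShadowHelpers

/-- A simple homeomorphism of a compact metric space has the shadowing property. -/
theorem stmt12 {X : Type*} [MetricSpace X] [CompactSpace X] (f : X ≃ₜ X)
    (hsimple : ∃ p q : X, SimpleSystem f p q) :
    ShadowingZ ⇑f ⇑f.symm := by
  obtain ⟨p, q, hfp, hfq, hQA, hQR, hconv⟩ := hsimple
  have hqsymm : f.symm q = q := simpleShadow.symm_fixed f hfq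
  classical
  intro ε hε
  set ε' : ℝ := if p = q then ε else min ε (dist p q) with hε'def
  have hε'pos : 0 < ε' := by
    by_cases h : p = q
    · rw [hε'def, if_pos h]; exact hε
    · rw [hε'def, if_neg h]; exact lt_min hε (dist_pos.2 h)
  have hε'le : ε' ≤ ε := by
    by_cases h : p = q
    · rw [hε'def, if_pos h]
    · rw [hε'def, if_neg h]; exact min_le_left _ _
  obtain ⟨V, hVopen, hpV', hVball, hVtrap⟩ := hQA.2.2 (ball p (ε'/2)) isOpen_ball
    (singleton_subset_iff.2 (mem_ball_self (by positivity)))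
  have hpV : p ∈ V := hpV' rfl
  obtain ⟨W₁, hWopen, hqW', hWball, hWtrap⟩ := hQR.2.2 (ball q (ε'/2)) isOpen_ball
    (singleton_subset_iff.2 (mem_ball_self (by positivity)))
  have hqW : q ∈ W₁ := hqW' rfl
  have hfV : ⇑f '' V ⊆ V := subset_closure.trans hVtrap
  have hsW : ⇑f.symm '' W₁ ⊆ W₁ := subset_closure.trans hWtrap
  set W₂ : Set X := ⇑f.symm '' W₁ with hW₂def
  have hW₂open : IsOpen W₂ := (f.symm.isOpen_image).2 hWopen
  have hqW₂ : q ∈ W₂ := ⟨q, hqW, hqsymm⟩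
  have hW₂W₁ : W₂ ⊆ W₁ := hsW
  have hclW₂ : closure W₂ ⊆ W₁ := hWtrap
  have hsW₂ : ⇑f.symm '' W₂ ⊆ W₂ := image_mono hsW
  have hclsW₂ : closure (⇑f.symm '' W₂) ⊆ W₂ := by
    rw [← f.symm.image_closure]
    exact image_mono hclW₂
  obtain ⟨r₀, hr₀, hr₀'⟩ := (isClosed_closure (s := ⇑f '' V)).isCompact.exists_thickening_subset_open hVopen hVtrap
  obtain ⟨r₁, hr₁, hr₁'⟩ := (isClosed_closure (s := W₂)).isCompact.exists_thickening_subset_open hWopen hclW₂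
  obtain ⟨r₂, hr₂, hr₂'⟩ := (isClosed_closure (s := ⇑f.symm '' W₂)).isCompact.exists_thickening_subset_open hW₂open hclsW₂
  obtain ⟨M, hM⟩ : ∃ M : ℕ, ∀ z ∈ W₂ᶜ, (⇑f)^[M] z ∈ V := by
    apply simpleShadow.exists_uniform_time f.continuous hW₂open.isClosed_compl.isCompact hVopen hfV
    intro z hz
    by_cases hzp : z = p
    · exact ⟨0, by simpa [hzp] using hpV⟩
    by_cases hzq : z = q
    · exact absurd (hzq ▸ hqW₂) hz
    · exact ((hconv z hzp hzq).1.eventually_mem (hVopen.mem_nhds hpV)).exists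
  obtain ⟨M', hM'⟩ : ∃ M' : ℕ, ∀ z ∈ Vᶜ, (⇑f.symm)^[M'] z ∈ W₂ := by
    apply simpleShadow.exists_uniform_time f.symm.continuous hVopen.isClosed_compl.isCompact hW₂open hsW₂
    intro z hz
    by_cases hzq : z = q
    · exact ⟨0, by simpa [hzq] using hqW₂⟩
    by_cases hzp : z = p
    · exact absurd (hzp ▸ hpV) hz
    · exact ((hconv z hzp hzq).2.eventually_mem (hW₂open.mem_nhds hqW₂)).exists
  have hfu : UniformContinuous ⇑f := CompactSpace.uniformContinuous_of_continuous f.continuous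
  have hsu : UniformContinuous ⇑f.symm := CompactSpace.uniformContinuous_of_continuous f.symm.continuous
  obtain ⟨δt, hδtpos, hδt'⟩ := simpleShadow.track hfu (M+1) (min r₀ ε') (lt_min hr₀ hε'pos)
  obtain ⟨δb, hδbpos, hδb'⟩ := simpleShadow.track hsu (M'+1) r₂ hr₂
  obtain ⟨γ₁, hγ₁pos, hγ₁'⟩ := Metric.uniformContinuous_iff.1 hsu (min (min r₁ r₂) δb)
    (lt_min (lt_min hr₁ hr₂) hδbpos)
  refine ⟨min (min δt r₀) γ₁, by positivity, fun x hx => ?_⟩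
  have hback : ∀ n : ℤ, dist (⇑f.symm (x (n+1))) (x n) < min (min r₁ r₂) δb := by
    intro n
    have h1 := hγ₁' ((hx n).trans_le (min_le_right _ _))
    rwa [f.symm_apply_apply, dist_comm] at h1
  have hCup : ∀ n : ℤ, x n ∈ V → x (n+1) ∈ V := by
    intro n hn
    apply hr₀'
    rw [Metric.mem_thickening_iff]
    exact ⟨f (x n), subset_closure ⟨x n, hn, rfl⟩, by
      rw [dist_comm]
      exact (hx n).trans_le ((min_le_left _ _).trans (min_le_right _ _))⟩
  have hVmono : ∀ m n : ℤ, m ≤ n → x m ∈ V → x n ∈ V := by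
    have key : ∀ (m : ℤ) (j : ℕ), x m ∈ V → x (m + j) ∈ V := by
      intro m j hm
      induction j with
      | zero => simpa using hm
      | succ j ih =>
        have h2 := hCup (m + j) ih
        rwa [show (m + (j:ℤ)) + 1 = m + ((j:ℕ)+1 : ℕ) by push_cast; ring] at h2
    intro m n hmn hm
    have h3 := key m (n - m).toNat hm
    rwa [show m + (((n - m).toNat : ℕ) : ℤ) = n by omega] at h3
  have hCdn : ∀ n : ℤ, x (n+1) ∈ W₂ → x n ∈ W₂ := by
    intro n hn
    apply hr₂'
    rw [Metric.mem_thickening_iff]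
    refine ⟨f.symm (x (n+1)), subset_closure ⟨x (n+1), hn, rfl⟩, ?_⟩
    rw [dist_comm]
    exact (hback n).trans_le ((min_le_left _ _).trans (min_le_right _ _))
  have hW₂mono : ∀ m n : ℤ, n ≤ m → x m ∈ W₂ → x n ∈ W₂ := by
    have key : ∀ (m : ℤ) (j : ℕ), x m ∈ W₂ → x (m - j) ∈ W₂ := by
      intro m j hm
      induction j with
      | zero => simpa using hm
      | succ j ih =>
        have h2 : x (m - ((j:ℕ)+1 : ℕ) + 1) ∈ W₂ := by
          rwa [show (m - ((j:ℕ)+1 : ℕ) + 1 : ℤ) = m - j by push_cast; ring]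
        exact hCdn _ h2
    intro m n hnm hm
    have h3 := key m (m - n).toNat hm
    rwa [show m - (((m - n).toNat : ℕ) : ℤ) = n by omega] at h3
  have htrF : ∀ (n : ℤ) (k : ℕ), k ≤ M+1 → dist ((⇑f)^[k] (x n)) (x (n + k)) < min r₀ ε' := by
    intro n k hk
    have hps : ∀ j : ℕ, dist (⇑f ((fun j : ℕ => x (n + j)) j)) ((fun j : ℕ => x (n + j)) (j+1)) < δt := by
      intro j
      have h1 := (hx (n + j)).trans_le ((min_le_left _ _).trans (min_le_left _ _))
      show dist (⇑f (x (n + (j:ℤ)))) (x (n + ((j+1:ℕ):ℤ))) < δt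
      rw [show (n + ((j+1:ℕ):ℤ) : ℤ) = n + j + 1 by push_cast; ring]
      exact h1
    have h2 := hδt' (fun j : ℕ => x (n + j)) hps k hk
    simpa using h2
  have htrB : ∀ (n : ℤ) (k : ℕ), k ≤ M'+1 → dist ((⇑f.symm)^[k] (x n)) (x (n - k)) < r₂ := by
    intro n k hk
    have hps : ∀ j : ℕ, dist (⇑f.symm ((fun j : ℕ => x (n - j)) j)) ((fun j : ℕ => x (n - j)) (j+1)) < δb := by
      intro j
      have h1 := (hback (n - j - 1)).trans_le (min_le_right _ _)
      rw [show (n - (j:ℤ) - 1 + 1 : ℤ) = n - j by ring] at h1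
      show dist (⇑f.symm (x (n - (j:ℤ)))) (x (n - ((j+1:ℕ):ℤ))) < δb
      rw [show (n - ((j+1:ℕ):ℤ) : ℤ) = n - (j:ℤ) - 1 by push_cast; ring]
      exact h1
    have h2 := hδb' (fun j : ℕ => x (n - j)) hps k hk
    simpa using h2
  have hC3 : ∀ n : ℤ, x n ∉ W₂ → x (n + ((M+1 : ℕ) : ℤ)) ∈ V := by
    intro n hn
    apply hr₀'
    rw [Metric.mem_thickening_iff]
    refine ⟨(⇑f)^[M+1] (x n), ?_, ?_⟩
    · rw [Function.iterate_succ_apply']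
      exact subset_closure ⟨_, hM (x n) hn, rfl⟩
    · rw [dist_comm]
      exact (htrF n (M+1) le_rfl).trans_le (min_le_left _ _)
  have hC4 : ∀ n : ℤ, x n ∉ V → x (n - ((M'+1 : ℕ) : ℤ)) ∈ W₂ := by
    intro n hn
    apply hr₂'
    rw [Metric.mem_thickening_iff]
    refine ⟨(⇑f.symm)^[M'+1] (x n), ?_, ?_⟩
    · rw [Function.iterate_succ_apply']
      exact subset_closure ⟨_, hM' (x n) hn, rfl⟩
    · rw [dist_comm]
      exact htrB n (M'+1) le_rfl
  have hVp : ∀ z ∈ V, dist z p < ε'/2 := fun z hz => mem_ball.1 (hVball hz)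
  have hWq : ∀ z ∈ W₁, dist z q < ε'/2 := fun z hz => mem_ball.1 (hWball hz)
  by_cases hAall : ∀ n : ℤ, x n ∈ V
  · refine ⟨p, fun n => ?_⟩
    rw [simpleShadow.iterZ_fixed f hfp]
    have h1 := hVp _ (hAall n)
    rw [dist_comm]
    linarith
  by_cases hBall : ∀ n : ℤ, x n ∈ W₂
  · refine ⟨q, fun n => ?_⟩
    rw [simpleShadow.iterZ_fixed f hfq]
    have h1 := hWq _ (hW₂W₁ (hBall n))
    rw [dist_comm]
    linarith
  push_neg at hAall hBall
  obtain ⟨n₁, hn₁⟩ := hBall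
  obtain ⟨n₂, hn₂⟩ := hAall
  by_cases hboth : ∃ n : ℤ, x n ∈ V ∧ x n ∈ W₂
  · obtain ⟨n₀, hn₀V, hn₀W⟩ := hboth
    have hpq : p = q := by
      by_contra hpq
      have h1 : dist p q < ε' := by
        have h2 := hVp _ hn₀V
        have h3 := hWq _ (hW₂W₁ hn₀W)
        calc dist p q ≤ dist p (x n₀) + dist (x n₀) q := dist_triangle _ _ _
          _ < ε'/2 + ε'/2 := by
              rw [dist_comm p]
              exact add_lt_add h2 h3
          _ = ε' := by ring
      have h2 : ε' ≤ dist p q := by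
        rw [hε'def, if_neg hpq]; exact min_le_right _ _
      linarith
    refine ⟨p, fun n => ?_⟩
    rw [simpleShadow.iterZ_fixed f hfp]
    rcases le_total n₀ n with h | h
    · have h1 := hVp _ (hVmono n₀ n h hn₀V)
      rw [dist_comm]
      linarith
    · have h1 := hWq _ (hW₂W₁ (hW₂mono n₀ n h hn₀W))
      rw [dist_comm, hpq]
      linarith
  have hBne : ∃ n : ℤ, x n ∈ W₂ := ⟨n₂ - ((M'+1:ℕ) : ℤ), hC4 n₂ hn₂⟩
  have hBbd : ∀ z : ℤ, x z ∈ W₂ → z ≤ n₁ + ((M+1:ℕ) : ℤ) := by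
    intro z hz
    by_contra hlt
    push_neg at hlt
    have hzV : x z ∈ V := hVmono _ _ (le_of_lt hlt) (hC3 n₁ hn₁)
    exact hboth ⟨z, hzV, hz⟩
  obtain ⟨b, hbB, hbmax⟩ := Int.exists_greatest_of_bdd ⟨n₁ + ((M+1:ℕ) : ℤ), hBbd⟩ hBne
  have hxc : x (b + 1) ∉ W₂ := fun h => by have := hbmax (b+1) h; omega
  have haV : x ((b + 1) + ((M+1:ℕ) : ℤ)) ∈ V := hC3 (b+1) hxc
  refine ⟨iterZ ⇑f ⇑f.symm (-(b+1)) (x (b+1)), fun n => ?_⟩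
  have hiter : iterZ ⇑f ⇑f.symm n (iterZ ⇑f ⇑f.symm (-(b+1)) (x (b+1)))
      = ⇑(f.toEquiv ^ (n - (b+1))) (x (b+1)) := by
    rw [simpleShadow.iterZ_eq, simpleShadow.iterZ_eq, ← Equiv.Perm.mul_apply, ← zpow_add,
      show n + -(b+1) = n - (b+1) by ring]
  rw [hiter]
  rcases lt_or_ge n (b+1) with hn | hn
  · -- n ≤ b : backward side
    have hcoe : ⇑(f.toEquiv ^ (n - (b+1))) = (⇑f.symm)^[((b+1) - n).toNat] := by
      have he : (-(n - (b+1))).toNat = ((b+1) - n).toNat := by omega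
      rw [simpleShadow.zpow_coe_nonpos f _ (by omega), he]
    rw [hcoe]
    have h1 : ⇑f.symm (x (b+1)) ∈ W₁ := by
      apply hr₁'
      rw [Metric.mem_thickening_iff]
      refine ⟨x b, subset_closure hbB, ?_⟩
      exact (hback b).trans_le ((min_le_left _ _).trans (min_le_left _ _))
    have h2 : (⇑f.symm)^[((b+1) - n).toNat] (x (b+1)) ∈ W₁ := by
      obtain ⟨k', hk'⟩ : ∃ k', ((b+1) - n).toNat = k' + 1 := ⟨((b+1) - n).toNat - 1, by omega⟩
      rw [hk', Function.iterate_succ_apply]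
      exact simpleShadow.iter_mem hsW k' h1
    have h3 : x n ∈ W₁ := hW₂W₁ (hW₂mono b n (by omega) hbB)
    have h4 := hWq _ h2
    have h5 := hWq _ h3
    calc dist ((⇑f.symm)^[((b+1) - n).toNat] (x (b+1))) (x n)
        ≤ dist ((⇑f.symm)^[((b+1) - n).toNat] (x (b+1))) q + dist q (x n) := dist_triangle _ _ _
      _ < ε'/2 + ε'/2 := add_lt_add h4 (by rw [dist_comm]; exact h5)
      _ = ε' := by ring
      _ ≤ ε := hε'le
  · -- n ≥ b+1 : forward side
    have hcoe : ⇑(f.toEquiv ^ (n - (b+1))) = (⇑f)^[(n - (b+1)).toNat] := by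
      exact simpleShadow.zpow_coe_nonneg f _ (by omega)
    rw [hcoe]
    rcases le_or_gt (n - (b+1)).toNat (M+1) with hk | hk
    · have h1 := htrF (b+1) (n - (b+1)).toNat hk
      rw [show (b+1) + (((n - (b+1)).toNat : ℕ) : ℤ) = n by omega] at h1
      exact lt_of_lt_of_le h1 ((min_le_right _ _).trans hε'le)
    · have h1 : (⇑f)^[(n - (b+1)).toNat] (x (b+1)) ∈ V := by
        have h2 : (⇑f)^[((n - (b+1)).toNat - M) + M] (x (b+1)) ∈ V := by
          rw [Function.iterate_add_apply]
          exact simpleShadow.iter_mem hfV _ (hM _ hxc)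
        rwa [Nat.sub_add_cancel (by omega)] at h2
      have h2 : x n ∈ V := hVmono ((b+1) + ((M+1:ℕ) : ℤ)) n (by omega) haV
      have h3 := hVp _ h1
      have h4 := hVp _ h2
      calc dist ((⇑f)^[(n - (b+1)).toNat] (x (b+1))) (x n)
          ≤ dist ((⇑f)^[(n - (b+1)).toNat] (x (b+1))) p + dist p (x n) := dist_triangle _ _ _
        _ < ε'/2 + ε'/2 := add_lt_add h3 (by rw [dist_comm]; exact h4)
        _ = ε' := by ring
        _ ≤ ε := hε'le
end

section
/- Let X be a continuum, D = {d₁, d₂, …} ⊆ X a countable set, and 1 ≤ n ≤ ω. Let Z ⊆ X × ℝ² be the (X,D,n)-comb, Z = {(x,0) : x ∈ X \ D} ∪ {(d_i, (1/i)·y) : d_i ∈ D, y ∈ st_n}, with the product metric. Let h₁: X → X be such that (X,h₁) is a simple dynamical system with quasi-attractor fixed point p and quasi-repeller fixed point q, with p, q ∈ X \ D and h₁(D) = D. Then there exists a homeomorphism h: Z → Z such that Π ∘ h = h₁ ∘ Π, where Π: Z → X is the projection Π(x,y) = x, and (Z,h) is a simple dynamical system with quasi-attractor fixed point (p,0) and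 quasi-repeller fixed point (q,0). -/
open Set Metric Filter Function

/-- The `n`-star: `n` line segments in the plane emanating from the origin,
pairwise meeting only at the origin. -/
def stN (n : ℕ) : Set (ℝ × ℝ) :=
  ⋃ i : Fin n, {q | ∃ t ∈ Set.Icc (0 : ℝ) 1, q = (t, t * (i : ℝ))}

/-- The `ω`-star: countably many segments emanating from the origin whose
diameters tend to zero. -/
def stOmega : Set (ℝ × ℝ) :=
  ⋃ n : ℕ, {q | ∃ t ∈ Set.Icc (0 : ℝ) (((n : ℝ) + 1)⁻¹), q = (t, t / ((n : ℝ) + 1))}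

/-- The `(X, D, s)`-comb, where `D = {d 0, d 1, …}` and `s` is a star: the subset
of `X × ℝ²` obtained from `X × {0}` by attaching at each point `d i` a copy of the
star `s` scaled by `1/(i+1)`. The product `X × ℝ²` carries the sup (product)
metric. -/
def combSet {X : Type*} (d : ℕ → X) (s : Set (ℝ × ℝ)) : Set (X × (ℝ × ℝ)) :=
  {z | (z.1 ∉ Set.range d ∧ z.2 = 0) ∨
    ∃ i : ℕ, ∃ y ∈ s, z.1 = d i ∧ z.2 = ((i : ℝ) + 1)⁻¹ • y}

namespace Comb13


set_option linter.unusedSectionVars false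

variable {X : Type*} [MetricSpace X]

open Classical in
noncomputable def gmap (d : ℕ → X) (π : ℕ → ℕ) (x : X) : ℝ :=
  if x ∈ Set.range d then
    (((π (Function.invFun d x) : ℕ) : ℝ) + 1)⁻¹ * (((Function.invFun d x : ℕ) : ℝ) + 1)
  else 1

noncomputable def Fmap (d : ℕ → X) (e : X → X) (π : ℕ → ℕ) (z : X × (ℝ × ℝ)) :
    X × (ℝ × ℝ) := (e z.1, gmap d π z.1 • z.2)

lemma gmap_d (d : ℕ → X) (hd : Function.Injective d) (π : ℕ → ℕ) (i : ℕ) :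
    gmap d π (d i) = (((π i : ℕ) : ℝ) + 1)⁻¹ * ((i : ℝ) + 1) := by
  unfold gmap
  rw [if_pos ⟨i, rfl⟩, Function.leftInverse_invFun hd i]

lemma gmap_smul (d : ℕ → X) (hd : Function.Injective d) (π : ℕ → ℕ) (i : ℕ) (y : ℝ × ℝ) :
    gmap d π (d i) • (((i : ℝ) + 1)⁻¹ • y) = (((π i : ℕ) : ℝ) + 1)⁻¹ • y := by
  rw [gmap_d d hd π i, smul_smul]
  congr 1
  have h1 : ((i : ℝ) + 1) ≠ 0 := by positivity
  have h2 : (((π i : ℕ) : ℝ) + 1) ≠ 0 := by positivity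
  field_simp

omit [MetricSpace X] in
lemma snd_eq_zero {d : ℕ → X} {s : Set (ℝ × ℝ)} {z : X × (ℝ × ℝ)}
    (hz : z ∈ combSet d s) (h1 : z.1 ∉ Set.range d) : z.2 = 0 := by
  rcases hz with ⟨_, h⟩ | ⟨i, y, _, hx, _⟩
  · exact h
  · exact absurd ⟨i, hx.symm⟩ h1

lemma Fmap_mem {d : ℕ → X} (hd : Function.Injective d) {s : Set (ℝ × ℝ)} {e : X → X}
    {π : ℕ → ℕ} (he1 : ∀ i, e (d i) = d (π i))
    (he2 : ∀ x, x ∉ Set.range d → e x ∉ Set.range d)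
    {z : X × (ℝ × ℝ)} (hz : z ∈ combSet d s) : Fmap d e π z ∈ combSet d s := by
  rcases hz with ⟨hx, hv⟩ | ⟨i, y, hy, hx, hv⟩
  · left
    exact ⟨he2 _ hx, by simp only [Fmap]; rw [hv, smul_zero]⟩
  · right
    refine ⟨π i, y, hy, ?_, ?_⟩
    · simp only [Fmap]; rw [hx, he1]
    · simp only [Fmap]; rw [hx, hv, gmap_smul d hd]

lemma Fmap_inv {d : ℕ → X} (hd : Function.Injective d) {s : Set (ℝ × ℝ)}
    {e e' : X → X} {π π' : ℕ → ℕ}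
    (hee' : ∀ x, e' (e x) = x) (he1 : ∀ i, e (d i) = d (π i)) (hπ : ∀ i, π' (π i) = i)
    {z : X × (ℝ × ℝ)} (hz : z ∈ combSet d s) : Fmap d e' π' (Fmap d e π z) = z := by
  rcases hz with ⟨hx, hv⟩ | ⟨i, y, hy, hx, hv⟩
  · rw [Prod.ext_iff]
    constructor
    · simp only [Fmap]; exact hee' z.1
    · simp only [Fmap]; rw [hv, smul_zero, smul_zero]
  · rw [Prod.ext_iff]
    constructor
    · simp only [Fmap]; exact hee' z.1
    · simp only [Fmap]
      rw [hx, hv, gmap_smul d hd π i y, he1 i, gmap_smul d hd π' (π i) y, hπ i]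

lemma keylem {d : ℕ → X} (hd : Function.Injective d) {s : Set (ℝ × ℝ)} {C : ℝ}
    (hsC : ∀ y ∈ s, ‖y‖ ≤ C) {π : ℕ → ℕ} (hπ : Function.Injective π)
    (x₀ : X) {ε : ℝ} (hε : 0 < ε) :
    ∃ δ > 0, ∀ z ∈ combSet d s, dist z.1 x₀ < δ →
      z.1 = x₀ ∨ (‖z.2‖ < ε ∧ ‖gmap d π z.1 • z.2‖ < ε) := by
  have hfin : {j : ℕ | ε ≤ C * ((j : ℝ) + 1)⁻¹}.Finite := by
    apply Set.Finite.subset (Set.finite_Iic ⌈C / ε⌉₊)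
    intro j hj
    simp only [Set.mem_setOf_eq] at hj
    have hj1 : (0 : ℝ) < (j : ℝ) + 1 := by positivity
    have h2 : ε * ((j : ℝ) + 1) ≤ C := by
      have := mul_le_mul_of_nonneg_right hj hj1.le
      rwa [mul_assoc, inv_mul_cancel₀ hj1.ne', mul_one] at this
    have h3 : (j : ℝ) + 1 ≤ C / ε := by
      rw [le_div_iff₀ hε, mul_comm]; exact h2
    have h4 : (j : ℝ) ≤ (⌈C / ε⌉₊ : ℝ) := by
      have := Nat.le_ceil (C / ε); linarith
    exact Set.mem_Iic.mpr (Nat.cast_le.mp h4)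
  set S : Set ℕ :=
    {i | d i ≠ x₀ ∧ (ε ≤ C * ((i : ℝ) + 1)⁻¹ ∨ ε ≤ C * (((π i : ℕ) : ℝ) + 1)⁻¹)} with hS
  have hSfin : S.Finite := by
    apply Set.Finite.subset (hfin.union (hfin.preimage hπ.injOn))
    rintro i ⟨-, h | h⟩
    · exact Or.inl h
    · exact Or.inr h
  have hTfin : (d '' S).Finite := hSfin.image d
  have hx₀ : x₀ ∈ (d '' S)ᶜ := by
    rintro ⟨i, hiS, hix⟩
    exact hiS.1 hix
  obtain ⟨δ, hδ, hball⟩ := Metric.isOpen_iff.mp hTfin.isClosed.isOpen_compl x₀ hx₀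
  refine ⟨δ, hδ, ?_⟩
  rintro z hz hdist
  rcases hz with ⟨hx, hv⟩ | ⟨i, y, hy, hx, hv⟩
  · right
    rw [hv, smul_zero, norm_zero]
    exact ⟨hε, hε⟩
  · by_cases hix : d i = x₀
    · exact Or.inl (hx.trans hix)
    · have hiS : i ∉ S := by
        intro hiS
        have : z.1 ∈ ball x₀ δ := hdist
        exact hball this ⟨i, hiS, hx.symm⟩
      rw [hS, Set.mem_setOf_eq] at hiS
      push_neg at hiS
      obtain ⟨h1, h2⟩ := hiS hix
      have key : ∀ c : ℕ, C * ((c : ℝ) + 1)⁻¹ < ε → ‖((c : ℝ) + 1)⁻¹ • y‖ < ε := by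
        intro c hc
        have hc1 : (0 : ℝ) ≤ ((c : ℝ) + 1)⁻¹ := by positivity
        calc ‖((c : ℝ) + 1)⁻¹ • y‖ = ((c : ℝ) + 1)⁻¹ * ‖y‖ := by
              rw [norm_smul, Real.norm_eq_abs, abs_of_nonneg hc1]
          _ ≤ ((c : ℝ) + 1)⁻¹ * C := mul_le_mul_of_nonneg_left (hsC y hy) hc1
          _ = C * ((c : ℝ) + 1)⁻¹ := mul_comm _ _
          _ < ε := hc
      right
      constructor
      · rw [hv]; exact key i h1
      · rw [hx, hv, gmap_smul d hd]; exact key (π i) h2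


lemma cont_phi {d : ℕ → X} (hd : Function.Injective d) {s : Set (ℝ × ℝ)} {C : ℝ}
    (hsC : ∀ y ∈ s, ‖y‖ ≤ C) {π : ℕ → ℕ} (hπ : Function.Injective π) :
    Continuous (fun z : combSet d s =>
      gmap d π (z : X × (ℝ × ℝ)).1 • (z : X × (ℝ × ℝ)).2) := by
  rw [continuous_iff_continuousAt]
  intro z₀
  rw [Metric.continuousAt_iff]
  intro ε hε
  by_cases hx₀ : (z₀ : X × (ℝ × ℝ)).1 ∈ Set.range d
  · -- tooth case
    obtain ⟨i, hi⟩ := hx₀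
    set L : ℝ := |gmap d π (d i)| with hL
    have hL0 : 0 ≤ L := abs_nonneg _
    set ε₁ : ℝ := ε / (2 * (L + 1)) with hε₁def
    have hε₁ : 0 < ε₁ := by positivity
    have hε₁L : ε₁ * (2 * (L + 1)) = ε := by
      rw [hε₁def]; field_simp
    obtain ⟨δ₀, hδ₀, hkey⟩ := keylem hd hsC hπ (d i) hε₁
    refine ⟨min δ₀ ε₁, lt_min hδ₀ hε₁, ?_⟩
    intro z hz
    rw [Subtype.dist_eq, Prod.dist_eq] at hz
    have h1 : dist (z : X × (ℝ × ℝ)).1 (d i) < min δ₀ ε₁ := by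
      rw [hi]; exact (le_max_left _ _).trans_lt hz
    have h2 : dist (z : X × (ℝ × ℝ)).2 (z₀ : X × (ℝ × ℝ)).2 < min δ₀ ε₁ :=
      (le_max_right _ _).trans_lt hz
    by_cases hz1 : (z : X × (ℝ × ℝ)).1 = d i
    · rw [hz1, ← hi, dist_smul₀, Real.norm_eq_abs, ← hL]
      calc L * dist (z : X × (ℝ × ℝ)).2 (z₀ : X × (ℝ × ℝ)).2
          ≤ L * ε₁ := by
            apply mul_le_mul_of_nonneg_left _ hL0
            exact (h2.trans_le (min_le_right _ _)).le
        _ < ε := by nlinarith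
    · rcases hkey (z : X × (ℝ × ℝ)) z.2 (h1.trans_le (min_le_left _ _)) with heq | ⟨hn1, hn2⟩
      · exact absurd heq hz1
      · -- far-tooth estimate
        have hv₀ : ‖(z₀ : X × (ℝ × ℝ)).2‖ ≤ 2 * ε₁ := by
          calc ‖(z₀ : X × (ℝ × ℝ)).2‖ = dist (z₀ : X × (ℝ × ℝ)).2 0 := (dist_zero_right _).symm
            _ ≤ dist (z₀ : X × (ℝ × ℝ)).2 (z : X × (ℝ × ℝ)).2 + dist (z : X × (ℝ × ℝ)).2 0 :=
                dist_triangle _ _ _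
            _ = dist (z : X × (ℝ × ℝ)).2 (z₀ : X × (ℝ × ℝ)).2 + ‖(z : X × (ℝ × ℝ)).2‖ := by
                rw [dist_comm, dist_zero_right]
            _ ≤ min δ₀ ε₁ + ε₁ := add_le_add h2.le hn1.le
            _ ≤ ε₁ + ε₁ := add_le_add (min_le_right _ _) le_rfl
            _ = 2 * ε₁ := by ring
        have hφ₀ : ‖gmap d π (z₀ : X × (ℝ × ℝ)).1 • (z₀ : X × (ℝ × ℝ)).2‖ ≤ L * (2 * ε₁) := by
          rw [← hi, norm_smul, Real.norm_eq_abs, ← hL]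
          exact mul_le_mul_of_nonneg_left hv₀ hL0
        calc dist (gmap d π (z : X × (ℝ × ℝ)).1 • (z : X × (ℝ × ℝ)).2)
              (gmap d π (z₀ : X × (ℝ × ℝ)).1 • (z₀ : X × (ℝ × ℝ)).2)
            ≤ ‖gmap d π (z : X × (ℝ × ℝ)).1 • (z : X × (ℝ × ℝ)).2‖ +
              ‖gmap d π (z₀ : X × (ℝ × ℝ)).1 • (z₀ : X × (ℝ × ℝ)).2‖ :=
              dist_le_norm_add_norm _ _
          _ ≤ ε₁ + L * (2 * ε₁) := add_le_add hn2.le hφ₀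
          _ < ε := by nlinarith
  · -- base case
    have hv₀ : (z₀ : X × (ℝ × ℝ)).2 = 0 := snd_eq_zero z₀.2 hx₀
    obtain ⟨δ, hδ, hkey⟩ := keylem hd hsC hπ (z₀ : X × (ℝ × ℝ)).1 hε
    refine ⟨δ, hδ, ?_⟩
    intro z hz
    rw [Subtype.dist_eq, Prod.dist_eq] at hz
    have h1 : dist (z : X × (ℝ × ℝ)).1 (z₀ : X × (ℝ × ℝ)).1 < δ :=
      (le_max_left _ _).trans_lt hz
    have h0 : gmap d π (z₀ : X × (ℝ × ℝ)).1 • (z₀ : X × (ℝ × ℝ)).2 = 0 := by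
      rw [hv₀, smul_zero]
    rw [h0, dist_zero_right]
    rcases hkey (z : X × (ℝ × ℝ)) z.2 h1 with heq | ⟨hn1, hn2⟩
    · have : (z : X × (ℝ × ℝ)).2 = 0 := snd_eq_zero z.2 (heq ▸ hx₀)
      rw [this, smul_zero, norm_zero]; exact hε
    · exact hn2

lemma fix_comb {d : ℕ → X} {s : Set (ℝ × ℝ)}
    (h : ↥(combSet d s) ≃ₜ ↥(combSet d s)) (e : X → X)
    (hproj : ∀ z : ↥(combSet d s), ((h z : X × (ℝ × ℝ))).1 = e ((z : X × (ℝ × ℝ)).1))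
    {p : X} (hp : p ∉ Set.range d) (hep : e p = p)
    (hP : ((p, 0) : X × (ℝ × ℝ)) ∈ combSet d s) :
    h ⟨(p, 0), hP⟩ = ⟨(p, 0), hP⟩ := by
  apply Subtype.ext
  have hfst : ((h ⟨(p, 0), hP⟩ : X × (ℝ × ℝ))).1 = p := by
    rw [hproj]; exact hep
  have hsnd : ((h ⟨(p, 0), hP⟩ : X × (ℝ × ℝ))).2 = 0 :=
    snd_eq_zero (h ⟨(p, 0), hP⟩).2 (by rw [hfst]; exact hp)
  exact Prod.ext hfst hsnd

lemma qa_comb {d : ℕ → X} (hd : Function.Injective d) {s : Set (ℝ × ℝ)} {C : ℝ}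
    (hsC : ∀ y ∈ s, ‖y‖ ≤ C) {p : X} (hp : p ∉ Set.range d)
    (h : ↥(combSet d s) ≃ₜ ↥(combSet d s)) (e : X ≃ₜ X)
    (hproj : ∀ z : ↥(combSet d s), ((h z : X × (ℝ × ℝ))).1 = e ((z : X × (ℝ × ℝ)).1))
    (hqa : QuasiAttractor ⇑e {p})
    (hP : ((p, 0) : X × (ℝ × ℝ)) ∈ combSet d s) :
    QuasiAttractor ⇑h {(⟨(p, 0), hP⟩ : ↥(combSet d s))} := by
  have hep : e p = p := by
    have := hqa.2.1
    rw [Set.image_singleton, Set.singleton_eq_singleton_iff] at this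
    exact this
  have hfix := fix_comb h ⇑e hproj hp hep hP
  refine ⟨isCompact_singleton, by rw [Set.image_singleton, hfix], ?_⟩
  intro U hU hPU
  obtain ⟨r, hr, hball⟩ := Metric.isOpen_iff.mp hU _ (hPU rfl)
  obtain ⟨δ, hδ, hkey⟩ := keylem hd hsC Function.injective_id p hr
  obtain ⟨V₁, hV₁o, hpV₁, hV₁sub, hV₁cl⟩ :=
    hqa.2.2 (Metric.ball p (min r δ)) Metric.isOpen_ball
      (Set.singleton_subset_iff.mpr (Metric.mem_ball_self (lt_min hr hδ)))
  set proj : ↥(combSet d s) → X := fun z => (z : X × (ℝ × ℝ)).1 with hprojdef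
  have hprojc : Continuous proj := continuous_fst.comp continuous_subtype_val
  have hpmem : (⟨(p, 0), hP⟩ : ↥(combSet d s)) ∈ proj ⁻¹' V₁ := by
    simp only [Set.mem_preimage, hprojdef]
    exact Set.singleton_subset_iff.mp hpV₁
  refine ⟨proj ⁻¹' V₁, hV₁o.preimage hprojc, Set.singleton_subset_iff.mpr hpmem, ?_, ?_⟩
  · intro z hz
    apply hball
    rw [mem_ball, Subtype.dist_eq, Prod.dist_eq]
    have h1 : dist (proj z) p < min r δ := Metric.mem_ball.mp (hV₁sub hz)
    refine max_lt (h1.trans_le (min_le_left _ _)) ?_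
    rw [dist_zero_right]
    rcases hkey (z : X × (ℝ × ℝ)) z.2 (h1.trans_le (min_le_right _ _)) with heq | ⟨hn, -⟩
    · rw [snd_eq_zero z.2 (by rw [heq]; exact hp), norm_zero]; exact hr
    · exact hn
  · have himg : ⇑h '' (proj ⁻¹' V₁) ⊆ proj ⁻¹' (⇑e '' V₁) := by
      rintro - ⟨z, hz, rfl⟩
      exact ⟨proj z, hz, (hproj z).symm⟩
    calc closure (⇑h '' (proj ⁻¹' V₁)) ⊆ closure (proj ⁻¹' (⇑e '' V₁)) := closure_mono himg
      _ ⊆ proj ⁻¹' closure (⇑e '' V₁) := hprojc.closure_preimage_subset _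
      _ ⊆ proj ⁻¹' V₁ := Set.preimage_mono hV₁cl

lemma tendsto_comb {d : ℕ → X} (hd : Function.Injective d) {s : Set (ℝ × ℝ)} {C : ℝ}
    (hsC : ∀ y ∈ s, ‖y‖ ≤ C) {p : X} (hp : p ∉ Set.range d)
    (h : ↥(combSet d s) ≃ₜ ↥(combSet d s)) (e : X → X)
    (hproj : ∀ z : ↥(combSet d s), ((h z : X × (ℝ × ℝ))).1 = e ((z : X × (ℝ × ℝ)).1))
    (hP : ((p, 0) : X × (ℝ × ℝ)) ∈ combSet d s)
    (z : ↥(combSet d s))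
    (hz : Tendsto (fun n : ℕ => e^[n] ((z : X × (ℝ × ℝ)).1)) atTop (nhds p)) :
    Tendsto (fun n : ℕ => (⇑h)^[n] z) atTop (nhds (⟨(p, 0), hP⟩ : ↥(combSet d s))) := by
  have hiter : ∀ n : ℕ, (((⇑h)^[n] z : ↥(combSet d s)) : X × (ℝ × ℝ)).1
      = e^[n] ((z : X × (ℝ × ℝ)).1) := by
    intro n
    induction n with
    | zero => simp
    | succ n ih =>
      rw [Function.iterate_succ_apply', Function.iterate_succ_apply', hproj, ih]
  rw [Metric.tendsto_atTop]
  intro ε hε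
  obtain ⟨δ, hδ, hkey⟩ := keylem hd hsC Function.injective_id p hε
  obtain ⟨N, hN⟩ := (Metric.tendsto_atTop.mp hz) (min δ ε) (lt_min hδ hε)
  refine ⟨N, fun n hn => ?_⟩
  rw [Subtype.dist_eq, Prod.dist_eq]
  have h1 : dist ((((⇑h)^[n] z : ↥(combSet d s)) : X × (ℝ × ℝ))).1 p < min δ ε := by
    rw [hiter n]; exact hN n hn
  refine max_lt (h1.trans_le (min_le_right _ _)) ?_
  rw [dist_zero_right]
  rcases hkey (((⇑h)^[n] z : ↥(combSet d s)) : X × (ℝ × ℝ)) ((⇑h)^[n] z).2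
      (h1.trans_le (min_le_left _ _)) with heq | ⟨hn2, -⟩
  · rw [snd_eq_zero ((⇑h)^[n] z).2 (by rw [heq]; exact hp), norm_zero]; exact hε
  · exact hn2


lemma cont_F {d : ℕ → X} (hd : Function.Injective d) {s : Set (ℝ × ℝ)} {C : ℝ}
    (hsC : ∀ y ∈ s, ‖y‖ ≤ C) {e : X → X} (he : Continuous e)
    {π : ℕ → ℕ} (hπ : Function.Injective π) :
    Continuous fun z : ↥(combSet d s) => Fmap d e π (z : X × (ℝ × ℝ)) := by
  unfold Fmap
  exact ((he.comp continuous_fst).comp continuous_subtype_val).prodMk (cont_phi hd hsC hπ)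



lemma star_bound {s : Set (ℝ × ℝ)} (hs : (∃ m : ℕ, 1 ≤ m ∧ s = stN m) ∨ s = stOmega) :
    ∃ C : ℝ, ∀ y ∈ s, ‖y‖ ≤ C := by
  rcases hs with ⟨m, hm, rfl⟩ | rfl
  · refine ⟨m, fun y hy => ?_⟩
    obtain ⟨i, t, ⟨ht0, ht1⟩, rfl⟩ := Set.mem_iUnion.mp hy
    have hm1 : (1 : ℝ) ≤ m := by exact_mod_cast hm
    have hi : (i : ℝ) ≤ m := by
      have : (i : ℕ) < m := i.isLt
      exact_mod_cast this.le
    rw [Prod.norm_def]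
    apply max_le
    · rw [Real.norm_eq_abs, abs_of_nonneg ht0]; linarith
    · have hi0 : (0 : ℝ) ≤ (i : ℝ) := by positivity
      rw [Real.norm_eq_abs, abs_of_nonneg (mul_nonneg ht0 hi0)]
      calc t * (i : ℝ) ≤ 1 * (m : ℝ) := mul_le_mul ht1 hi hi0 zero_le_one
        _ = m := one_mul _
  · refine ⟨1, fun y hy => ?_⟩
    obtain ⟨n, t, ⟨ht0, ht1⟩, rfl⟩ := Set.mem_iUnion.mp hy
    have h1 : (1 : ℝ) ≤ (n : ℝ) + 1 := by
      have : (0 : ℝ) ≤ (n : ℝ) := Nat.cast_nonneg n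
      linarith
    have hinv : ((n : ℝ) + 1)⁻¹ ≤ 1 := inv_le_one_of_one_le₀ h1
    rw [Prod.norm_def]
    apply max_le
    · rw [Real.norm_eq_abs, abs_of_nonneg ht0]; linarith
    · rw [Real.norm_eq_abs, abs_of_nonneg (div_nonneg ht0 (by linarith))]
      calc t / ((n : ℝ) + 1) ≤ t := div_le_self ht0 h1
        _ ≤ 1 := le_trans ht1 hinv


end Comb13

/-- If `(X, h₁)` is a simple dynamical system on a continuum `X` with
quasi-attractor fixed point `p` and quasi-repeller fixed point `q` lying outside
the countable set `D = range d`, and `h₁ (D) = D`, then the `(X, D, n)`-comb `Z`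
(with teeth a star `st_n`, `1 ≤ n ≤ ω`) carries a homeomorphism `h` with
`Π ∘ h = h₁ ∘ Π` such that `(Z, h)` is a simple dynamical system with
quasi-attractor fixed point `(p, 0)` and quasi-repeller fixed point `(q, 0)`. -/
theorem stmt13 {X : Type*} [MetricSpace X] [CompactSpace X] [ConnectedSpace X]
    (d : ℕ → X) (hd : Function.Injective d)
    (s : Set (ℝ × ℝ)) (hs : (∃ m : ℕ, 1 ≤ m ∧ s = stN m) ∨ s = stOmega)
    (h₁ : X ≃ₜ X) (p q : X)
    (hsimple : SimpleSystem h₁ p q)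
    (hp : p ∉ Set.range d) (hq : q ∉ Set.range d)
    (hD : ⇑h₁ '' Set.range d = Set.range d) :
    ∃ h : ↥(combSet d s) ≃ₜ ↥(combSet d s),
      (∀ z : ↥(combSet d s), ((h z : X × (ℝ × ℝ))).1 = h₁ ((z : X × (ℝ × ℝ)).1)) ∧
      SimpleSystem h ⟨(p, 0), Or.inl ⟨hp, rfl⟩⟩ ⟨(q, 0), Or.inl ⟨hq, rfl⟩⟩ := by
  classical
  obtain ⟨C, hsC⟩ := Comb13.star_bound hs
  have hmem : ∀ i, h₁ (d i) ∈ Set.range d := by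
    intro i; rw [← hD]; exact ⟨d i, ⟨i, rfl⟩, rfl⟩
  have hD' : ⇑h₁.symm '' Set.range d = Set.range d := by
    conv_lhs => rw [← hD]
    rw [← Set.image_comp]
    have : ⇑h₁.symm ∘ ⇑h₁ = id := by
      funext x; simp
    rw [this, Set.image_id]
  have hmem' : ∀ j, h₁.symm (d j) ∈ Set.range d := by
    intro j; rw [← hD']; exact ⟨d j, ⟨j, rfl⟩, rfl⟩
  choose σf hσf using fun i => Set.mem_range.mp (hmem i)
  choose σg hσg using fun j => Set.mem_range.mp (hmem' j)
  have hgf : ∀ i, σg (σf i) = i := by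
    intro i; apply hd
    rw [hσg, hσf, Homeomorph.symm_apply_apply]
  have hfg : ∀ j, σf (σg j) = j := by
    intro j; apply hd
    rw [hσf, hσg, Homeomorph.apply_symm_apply]
  have hσfinj : Function.Injective σf := Function.LeftInverse.injective hgf
  have hσginj : Function.Injective σg := Function.LeftInverse.injective hfg
  have he1 : ∀ i, h₁ (d i) = d (σf i) := fun i => (hσf i).symm
  have he1' : ∀ j, h₁.symm (d j) = d (σg j) := fun j => (hσg j).symm
  have he2 : ∀ x, x ∉ Set.range d → ⇑h₁ x ∉ Set.range d := by
    intro x hx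
    rintro ⟨j, hj⟩
    refine hx ⟨σg j, ?_⟩
    rw [hσg, hj, Homeomorph.symm_apply_apply]
  have he2' : ∀ x, x ∉ Set.range d → ⇑h₁.symm x ∉ Set.range d := by
    intro x hx
    rintro ⟨j, hj⟩
    refine hx ⟨σf j, ?_⟩
    rw [← he1, hj, Homeomorph.apply_symm_apply]
  let h : ↥(combSet d s) ≃ₜ ↥(combSet d s) :=
    { toFun := fun z => ⟨Comb13.Fmap d ⇑h₁ σf z, Comb13.Fmap_mem hd he1 he2 z.2⟩
      invFun := fun z => ⟨Comb13.Fmap d ⇑h₁.symm σg z, Comb13.Fmap_mem hd he1' he2' z.2⟩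
      left_inv := fun z =>
        Subtype.ext (Comb13.Fmap_inv hd (fun x => h₁.symm_apply_apply x) he1 hgf z.2)
      right_inv := fun z =>
        Subtype.ext (Comb13.Fmap_inv hd (fun x => h₁.apply_symm_apply x) he1' hfg z.2)
      continuous_toFun := (Comb13.cont_F hd hsC h₁.continuous hσfinj).subtype_mk _
      continuous_invFun := (Comb13.cont_F hd hsC h₁.symm.continuous hσginj).subtype_mk _ }
  have hproj : ∀ z : ↥(combSet d s),
      ((h z : X × (ℝ × ℝ))).1 = h₁ ((z : X × (ℝ × ℝ)).1) := fun z => rfl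
  have hproj' : ∀ z : ↥(combSet d s),
      ((h.symm z : X × (ℝ × ℝ))).1 = h₁.symm ((z : X × (ℝ × ℝ)).1) := fun z => rfl
  refine ⟨h, hproj, ?_, ?_, ?_, ?_, ?_⟩
  · exact Comb13.fix_comb h ⇑h₁ hproj hp hsimple.1 _
  · exact Comb13.fix_comb h ⇑h₁ hproj hq hsimple.2.1 _
  · exact Comb13.qa_comb hd hsC hp h h₁ hproj hsimple.2.2.1 _
  · exact Comb13.qa_comb hd hsC hq h.symm h₁.symm hproj' hsimple.2.2.2.1 _
  · intro z hzP hzQ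
    have hz1p : (z : X × (ℝ × ℝ)).1 ≠ p := by
      intro hcontra
      apply hzP
      apply Subtype.ext
      refine Prod.ext hcontra (Comb13.snd_eq_zero z.2 ?_)
      rw [hcontra]; exact hp
    have hz1q : (z : X × (ℝ × ℝ)).1 ≠ q := by
      intro hcontra
      apply hzQ
      apply Subtype.ext
      refine Prod.ext hcontra (Comb13.snd_eq_zero z.2 ?_)
      rw [hcontra]; exact hq
    obtain ⟨t1, t2⟩ := hsimple.2.2.2.2 _ hz1p hz1q
    exact ⟨Comb13.tendsto_comb hd hsC hp h ⇑h₁ hproj _ z t1,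
      Comb13.tendsto_comb hd hsC hq h.symm ⇑h₁.symm hproj' _ z t2⟩
end
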